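/- arXiv:2108.02534 — 5 statements merged into one kernel-verified Lean document; each statement's English description precedes it below -/
import Mathlib

section
/- Let m ≥ n be positive integers and let p be a degree-n real polynomial all of whose roots are real and nonnegative. Then the function u ↦ Q^{m,n}_p(u) is nondecreasing on [0, ∞). -/
open Polynomial

/-- The largest real root of a polynomial (junk value if there is none). -/
noncomputable def maxRoot (p : Polynomial ℝ) : ℝ :=
  sSup {x : ℝ | p.IsRoot x}

/-- The operator `S` on polynomials: `(Sp)(x) = p(x²)`. -/
noncomputable def Spoly (p : Polynomial ℝ) : Polynomial ℝ :=
  p.comp (Polynomial.X ^ 2)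

/-- The operator `V` (for parameters `m ≥ n`): `(Vp)(x) = x^{m−n} p(x)`. -/
noncomputable def Vpoly (m n : ℕ) (p : Polynomial ℝ) : Polynomial ℝ :=
  Polynomial.X ^ (m - n) * p

/-- `Q^{m,n}_p(u) = maxroot((Sp)·(SVp) − u·(Sp)'·(SVp)')`. -/
noncomputable def Qfun (m n : ℕ) (p : Polynomial ℝ) (u : ℝ) : ℝ :=
  maxRoot (Spoly p * Spoly (Vpoly m n p) -
    Polynomial.C u * (derivative (Spoly p)) * (derivative (Spoly (Vpoly m n p))))

open Filter in
/-- If a polynomial splits over `ℝ` then `p·p'` is nonnegative to the right of all roots. -/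
lemma aux_pp' (R : Multiset ℝ) : ∀ (c y : ℝ), (∀ a ∈ R, a ≤ y) →
    0 ≤ Polynomial.eval y ((C c * (R.map fun a => X - C a).prod) *
      derivative (C c * (R.map fun a => X - C a).prod)) := by
  induction R using Multiset.induction_on with
  | empty => intro c y _; simp
  | cons a R ih =>
    intro c y hy
    have ha : a ≤ y := hy a (Multiset.mem_cons_self a R)
    have hIH := ih c y (fun b hb => hy b (Multiset.mem_cons_of_mem hb))
    have hrw : C c * ((a ::ₘ R).map fun a => X - C a).prod
        = (X - C a) * (C c * (R.map fun a => X - C a).prod) := by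
      rw [Multiset.map_cons, Multiset.prod_cons]; ring
    rw [hrw, derivative_mul]
    set q := C c * (R.map fun a => X - C a).prod with hq
    simp only [derivative_sub, derivative_X, derivative_C, sub_zero, eval_mul, eval_add,
      eval_sub, eval_X, eval_C, one_mul] at hIH ⊢
    nlinarith [mul_nonneg (sub_nonneg.2 ha) (sq_nonneg (eval y q)),
      mul_nonneg (sq_nonneg (y - a)) hIH]

open Filter in
lemma exists_root_ge {h : Polynomial ℝ} (hlead : 0 < h.leadingCoeff) (hdeg : 0 < h.degree)
    {x₀ : ℝ} (hx : eval x₀ h ≤ 0) : ∃ z, h.IsRoot z ∧ x₀ ≤ z := by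
  have ht := tendsto_atTop_of_leadingCoeff_nonneg h hdeg hlead.le
  obtain ⟨y, hy1, hy2⟩ : ∃ y, 1 ≤ eval y h ∧ x₀ ≤ y :=
    ((ht.eventually_ge_atTop 1).and (eventually_ge_atTop x₀)).exists
  obtain ⟨z, hz, hz0⟩ := intermediate_value_Icc hy2 (h.continuous_aeval.continuousOn)
    (show (0:ℝ) ∈ Set.Icc (eval x₀ h) (eval y h) from ⟨hx, by linarith⟩)
  exact ⟨z, hz0, hz.1⟩

lemma le_maxRoot_of_eval_nonpos {h : Polynomial ℝ} (hlead : 0 < h.leadingCoeff)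
    (hdeg : 0 < h.degree) {x₀ : ℝ} (hx : eval x₀ h ≤ 0) : x₀ ≤ maxRoot h := by
  obtain ⟨z, hz, hz0⟩ := exists_root_ge hlead hdeg hx
  have hne : h ≠ 0 := fun h0 => by simp [h0] at hlead
  exact hz0.trans (le_csSup ((Polynomial.finite_setOf_isRoot hne).bddAbove) hz)

lemma eval_pos_of_maxRoot_lt {h : Polynomial ℝ} (hlead : 0 < h.leadingCoeff)
    (hdeg : 0 < h.degree) {x : ℝ} (hx : maxRoot h < x) : 0 < eval x h := by
  have hne : h ≠ 0 := fun h0 => by simp [h0] at hlead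
  by_contra hc
  push_neg at hc
  obtain ⟨z, hz, hz0⟩ := exists_root_ge hlead hdeg hc
  have : z ≤ maxRoot h := le_csSup ((Polynomial.finite_setOf_isRoot hne).bddAbove) hz
  linarith

/-- **Monotonicity of `Q^{m,n}_p`.**  For `m ≥ n ≥ 1` and a degree-`n` real polynomial `p`
all of whose roots are real and nonnegative, the function `u ↦ Q^{m,n}_p(u)` is
nondecreasing on `[0, ∞)`. -/
theorem Qfun_monotoneOn
    (m n : ℕ) (hn : 0 < n) (hmn : n ≤ m) (p : Polynomial ℝ)
    (hpdeg : p.natDegree = n)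
    (hproots : Multiset.card p.roots = n)
    (hppos : ∀ x ∈ p.roots, 0 ≤ x) :
    MonotoneOn (fun u => Qfun m n p u) (Set.Ici (0 : ℝ)) := by
  have hp0 : p ≠ 0 := by
    intro h0; rw [h0, natDegree_zero] at hpdeg; omega
  set c := p.leadingCoeff with hcdef
  have hc : c ≠ 0 := leadingCoeff_ne_zero.mpr hp0
  set A := Spoly p with hAdef
  set j := 2 * (m - n) with hjdef
  have hB : Spoly (Vpoly m n p) = X ^ j * A := by
    simp [Spoly, Vpoly, mul_comp, pow_comp, X_comp, hjdef, pow_mul, hAdef]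
  have hX2 : (X ^ 2 : Polynomial ℝ).natDegree = 2 := natDegree_X_pow 2
  have hAdeg : A.natDegree = 2 * n := by
    rw [hAdef, Spoly, natDegree_comp, hX2, hpdeg, mul_comm]
  have hAlead : A.leadingCoeff = c := by
    rw [hAdef, Spoly, leadingCoeff_comp (by rw [hX2]; norm_num)]
    simp [leadingCoeff_X_pow, hcdef]
  have hA0 : A ≠ 0 := leadingCoeff_ne_zero.mp (by rw [hAlead]; exact hc)
  have hXjA0 : (X ^ j * A : Polynomial ℝ) ≠ 0 := mul_ne_zero (pow_ne_zero _ X_ne_zero) hA0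
  have hABdeg : (A * (X ^ j * A)).natDegree = 2 * n + 2 * m := by
    rw [natDegree_mul hA0 hXjA0, natDegree_mul (pow_ne_zero _ X_ne_zero) hA0,
      natDegree_X_pow, hAdeg, hjdef]
    omega
  have hABlead : (A * (X ^ j * A)).leadingCoeff = c ^ 2 := by
    rw [leadingCoeff_mul, leadingCoeff_mul, leadingCoeff_X_pow, hAlead]; ring
  -- degree and leading coefficient facts about the family of polynomials
  have hlow : ∀ w : ℝ,
      (C w * derivative A * derivative (X ^ j * A)).natDegree < 2 * n + 2 * m := by
    intro w
    have h1 : (C w * derivative A).natDegree ≤ A.natDegree - 1 :=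
      (natDegree_C_mul_le _ _).trans (natDegree_derivative_le A)
    have h2 : (derivative (X ^ j * A)).natDegree ≤ (X ^ j * A).natDegree - 1 :=
      natDegree_derivative_le _
    have h3 : (X ^ j * A).natDegree = j + 2 * n := by
      rw [natDegree_mul (pow_ne_zero _ X_ne_zero) hA0, natDegree_X_pow, hAdeg]
    calc (C w * derivative A * derivative (X ^ j * A)).natDegree
        ≤ (C w * derivative A).natDegree + (derivative (X ^ j * A)).natDegree :=
          natDegree_mul_le
      _ < 2 * n + 2 * m := by rw [h3] at h2; rw [hAdeg] at h1; omega
  have hfacts : ∀ w : ℝ,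
      0 < (A * (X ^ j * A) - C w * derivative A * derivative (X ^ j * A)).leadingCoeff ∧
      0 < (A * (X ^ j * A) - C w * derivative A * derivative (X ^ j * A)).degree := by
    intro w
    have hdeq : (A * (X ^ j * A) - C w * derivative A * derivative (X ^ j * A)).natDegree
        = 2 * n + 2 * m := by
      rw [natDegree_sub_eq_left_of_natDegree_lt (by rw [hABdeg]; exact hlow w), hABdeg]
    have hcoeff : (A * (X ^ j * A) - C w * derivative A * derivative (X ^ j * A)).coeff
        (2 * n + 2 * m) = c ^ 2 := by
      rw [coeff_sub, coeff_eq_zero_of_natDegree_lt (hlow w), sub_zero, ← hABdeg,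
        coeff_natDegree, hABlead]
    have hl : (A * (X ^ j * A) - C w * derivative A * derivative (X ^ j * A)).leadingCoeff
        = c ^ 2 := by
      rw [leadingCoeff, hdeq, hcoeff]
    refine ⟨by rw [hl]; positivity, ?_⟩
    rw [← natDegree_pos_iff_degree_pos, hdeq]; omega
  -- the largest root of p
  have hRne : p.roots ≠ 0 := by
    intro h0; rw [h0, Multiset.card_zero] at hproots; omega
  have hRfin : p.roots.toFinset.Nonempty := by
    simpa [Multiset.toFinset_nonempty] using hRne
  set lam := p.roots.toFinset.max' hRfin with hlamdef
  have hlam_mem : lam ∈ p.roots := Multiset.mem_toFinset.mp (p.roots.toFinset.max'_mem hRfin)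
  have hlam_ub : ∀ a ∈ p.roots, a ≤ lam := fun a ha =>
    Finset.le_max' _ a (Multiset.mem_toFinset.mpr ha)
  have hlam0 : 0 ≤ lam := hppos lam hlam_mem
  set r := Real.sqrt lam with hrdef
  have hr0 : 0 ≤ r := Real.sqrt_nonneg _
  have hr2 : r ^ 2 = lam := Real.sq_sqrt hlam0
  -- p·p' is nonnegative beyond lam
  have hpp' : ∀ y : ℝ, lam ≤ y → 0 ≤ eval y p * eval y (derivative p) := by
    intro y hy
    have hsplit := C_leadingCoeff_mul_prod_multiset_X_sub_C (p := p) (by rw [hproots, hpdeg])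
    have haux := aux_pp' p.roots c y (fun a ha => (hlam_ub a ha).trans hy)
    rw [← hcdef] at hsplit
    rw [hsplit] at haux
    simpa [eval_mul] using haux
  have hevalA : ∀ x : ℝ, eval x A = eval (x ^ 2) p := by
    intro x; simp [hAdef, Spoly, eval_comp]
  have hevalA' : ∀ x : ℝ, eval x (derivative A) = 2 * x * eval (x ^ 2) (derivative p) := by
    intro x
    rw [hAdef, Spoly, derivative_comp, derivative_X_pow]
    simp [eval_comp]
  have hAA' : ∀ x : ℝ, 0 ≤ x → lam ≤ x ^ 2 →
      0 ≤ eval x A * eval x (derivative A) := by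
    intro x hx hx2
    rw [hevalA, hevalA']
    have := hpp' (x ^ 2) hx2
    nlinarith
  have hdB : ∀ x : ℝ, eval x (derivative (X ^ j * A))
      = (j : ℝ) * x ^ (j - 1) * eval x A + x ^ j * eval x (derivative A) := by
    intro x
    rw [derivative_mul, derivative_X_pow]
    simp [eval_add, eval_mul]
  have hg : ∀ x : ℝ, 0 ≤ x → lam ≤ x ^ 2 →
      0 ≤ eval x (derivative A * derivative (X ^ j * A)) := by
    intro x hx hx2
    rw [eval_mul, hdB]
    have h1 := hAA' x hx hx2
    have h2 : (0:ℝ) ≤ (j : ℝ) := Nat.cast_nonneg j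
    nlinarith [mul_nonneg (mul_nonneg h2 (pow_nonneg hx (j - 1))) h1,
      mul_nonneg (pow_nonneg hx j) (sq_nonneg (eval x (derivative A)))]
  have hAr : eval r A = 0 := by
    rw [hevalA, hr2]
    exact isRoot_of_mem_roots hlam_mem
  -- evaluation at r is nonpositive
  have hevalr : ∀ w : ℝ, 0 ≤ w →
      eval r (A * (X ^ j * A) - C w * derivative A * derivative (X ^ j * A)) ≤ 0 := by
    intro w hw
    have h0 := hg r hr0 (le_of_eq hr2.symm)
    rw [eval_mul] at h0
    simp only [eval_sub, eval_mul, eval_C, hAr, zero_mul, mul_zero]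
    nlinarith
  -- main monotonicity argument
  intro u hu v hv huv
  simp only [Set.mem_Ici] at hu hv
  show Qfun m n p u ≤ Qfun m n p v
  rw [Qfun, Qfun, ← hAdef, hB]
  obtain ⟨hleadu, hdegu⟩ := hfacts u
  obtain ⟨hleadv, hdegv⟩ := hfacts v
  have hrv : r ≤ maxRoot (A * (X ^ j * A) - C v * derivative A * derivative (X ^ j * A)) :=
    le_maxRoot_of_eval_nonpos hleadv hdegv (hevalr v hv)
  obtain ⟨z, hz, hzr⟩ := exists_root_ge hleadu hdegu (hevalr u hu)
  rw [maxRoot]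
  have hzmem : z ∈ {x : ℝ |
      (A * (X ^ j * A) - C u * derivative A * derivative (X ^ j * A)).IsRoot x} := hz
  apply csSup_le ⟨z, hzmem⟩
  intro x hx
  by_contra hcon
  push_neg at hcon
  have hxr : r < x := lt_of_le_of_lt hrv hcon
  have hx0 : 0 ≤ x := hr0.trans hxr.le
  have hx2 : lam ≤ x ^ 2 := by nlinarith
  have hpos := eval_pos_of_maxRoot_lt hleadv hdegv hcon
  have hgx := hg x hx0 hx2
  rw [eval_mul] at hgx
  have hxroot : eval x (A * (X ^ j * A) - C u * derivative A * derivative (X ^ j * A)) = 0 := by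
    have := hx
    simpa [Polynomial.IsRoot] using this
  simp only [eval_sub, eval_mul, eval_C] at hxroot hpos
  nlinarith [mul_le_mul_of_nonneg_right huv hgx]
end

section
/- Let k ≥ 1, d ≥ 2, n ≥ 2 be integers and set m = kn. Then √( k(n−1)/(m−1) ) · ( √(d−1) + √( d(m−1)/(n−1) − 1 ) ) = √(d−1)·√( 1 − (m−n)/(n(m−1)) ) + √( dk − 1 + (m−n)/(n(m−1)) ) ≤ √(d−1) + √(dk − 1). -/
lemma aux_sqrt_bound (a b ε : ℝ) (ha : 1 ≤ a) (hb : 1 ≤ b) (he0 : 0 ≤ ε) (he1 : ε ≤ 1) :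
    Real.sqrt a * Real.sqrt (1 - ε) + Real.sqrt (b + ε) ≤ Real.sqrt a + Real.sqrt b := by
  have hsa : 1 ≤ Real.sqrt a := by
    rw [show (1:ℝ) = Real.sqrt 1 by simp]; exact Real.sqrt_le_sqrt ha
  have hsb : 1 ≤ Real.sqrt b := by
    rw [show (1:ℝ) = Real.sqrt 1 by simp]; exact Real.sqrt_le_sqrt hb
  have h1 : Real.sqrt (1 - ε) ≤ 1 - ε/2 := by
    rw [show (1:ℝ) - ε/2 = Real.sqrt ((1 - ε/2)^2) from (Real.sqrt_sq (by linarith)).symm]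
    apply Real.sqrt_le_sqrt; nlinarith
  have h2 : Real.sqrt (b + ε) ≤ Real.sqrt b + ε/2 := by
    have hsq := Real.sq_sqrt (le_trans zero_le_one hb)
    rw [show Real.sqrt b + ε/2 = Real.sqrt ((Real.sqrt b + ε/2)^2) from
      (Real.sqrt_sq (by linarith)).symm]
    apply Real.sqrt_le_sqrt; nlinarith
  have h3 : Real.sqrt a * Real.sqrt (1 - ε) ≤ Real.sqrt a * (1 - ε/2) :=
    mul_le_mul_of_nonneg_left h1 (Real.sqrt_nonneg a)
  nlinarith

/-- **Better-than-Ramanujan shift.**  For integers `k ≥ 1`, `d ≥ 2`, `n ≥ 2` and `m = kn`: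
`√(k(n−1)/(m−1))·(√(d−1) + √(d(m−1)/(n−1) − 1))
  = √(d−1)·√(1 − (m−n)/(n(m−1))) + √(dk − 1 + (m−n)/(n(m−1)))
  ≤ √(d−1) + √(dk − 1)`. -/
theorem shifted_bound_better_than_ramanujan
    (k d n m : ℕ) (hk : 1 ≤ k) (hd : 2 ≤ d) (hn : 2 ≤ n) (hm : m = k * n) :
    (Real.sqrt ((k : ℝ) * ((n : ℝ) - 1) / ((m : ℝ) - 1)) *
        (Real.sqrt ((d : ℝ) - 1) +
          Real.sqrt ((d : ℝ) * ((m : ℝ) - 1) / ((n : ℝ) - 1) - 1)) =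
      Real.sqrt ((d : ℝ) - 1) *
          Real.sqrt (1 - ((m : ℝ) - n) / ((n : ℝ) * ((m : ℝ) - 1))) +
        Real.sqrt ((d : ℝ) * k - 1 + ((m : ℝ) - n) / ((n : ℝ) * ((m : ℝ) - 1)))) ∧
    Real.sqrt ((d : ℝ) - 1) *
          Real.sqrt (1 - ((m : ℝ) - n) / ((n : ℝ) * ((m : ℝ) - 1))) +
        Real.sqrt ((d : ℝ) * k - 1 + ((m : ℝ) - n) / ((n : ℝ) * ((m : ℝ) - 1))) ≤
      Real.sqrt ((d : ℝ) - 1) + Real.sqrt ((d : ℝ) * k - 1) := by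
  have hK : (1:ℝ) ≤ (k:ℝ) := by exact_mod_cast hk
  have hD : (2:ℝ) ≤ (d:ℝ) := by exact_mod_cast hd
  have hN : (2:ℝ) ≤ (n:ℝ) := by exact_mod_cast hn
  have hM : (m:ℝ) = (k:ℝ) * (n:ℝ) := by rw [hm]; push_cast; ring
  have hM2 : (2:ℝ) ≤ (m:ℝ) := by nlinarith
  have hN1 : (n:ℝ) - 1 ≠ 0 := by linarith
  have hM1 : (m:ℝ) - 1 ≠ 0 := by linarith
  have hNpos : (0:ℝ) < (n:ℝ) := by linarith
  have hNM : (n:ℝ) * ((m:ℝ) - 1) ≠ 0 := by nlinarith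
  set ε : ℝ := ((m:ℝ) - n) / ((n:ℝ) * ((m:ℝ) - 1)) with hε
  have hxε : (k:ℝ) * ((n:ℝ) - 1) / ((m:ℝ) - 1) = 1 - ε := by
    rw [hε]; field_simp; rw [hM]; ring
  have hxy : ((k:ℝ) * ((n:ℝ) - 1) / ((m:ℝ) - 1)) *
      ((d:ℝ) * ((m:ℝ) - 1) / ((n:ℝ) - 1) - 1) = (d:ℝ) * k - 1 + ε := by
    rw [hε]; field_simp; rw [hM]; ring
  have hxnn : (0:ℝ) ≤ (k:ℝ) * ((n:ℝ) - 1) / ((m:ℝ) - 1) := by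
    apply div_nonneg <;> nlinarith
  have heq : Real.sqrt ((k : ℝ) * ((n : ℝ) - 1) / ((m : ℝ) - 1)) *
        (Real.sqrt ((d : ℝ) - 1) +
          Real.sqrt ((d : ℝ) * ((m : ℝ) - 1) / ((n : ℝ) - 1) - 1)) =
      Real.sqrt ((d : ℝ) - 1) * Real.sqrt (1 - ε) +
        Real.sqrt ((d : ℝ) * k - 1 + ε) := by
    have h1ε : 0 ≤ 1 - ε := hxε ▸ hxnn
    rw [mul_add, ← Real.sqrt_mul hxnn, ← Real.sqrt_mul hxnn, hxy, hxε,
      Real.sqrt_mul h1ε, mul_comm]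
  refine ⟨heq, ?_⟩
  have hε0 : 0 ≤ ε := by
    apply div_nonneg
    · nlinarith
    · nlinarith
  have hε1 : ε ≤ 1 := by nlinarith [hxε, hxnn]
  exact aux_sqrt_bound _ _ _ (by linarith) (by nlinarith) hε0 hε1
end

section
/- Let m ≥ n ≥ 1, m ≥ s ≥ 0 and n ≥ r ≥ 0 be integers and let A be an m×n real matrix. Define Ã(y,z) = diag(y·I_s, I_{m−s}) · A · diag(z·I_r, I_{n−r}) and θ_A(x,y,z) = det( x·I_n + Ã(y,z)ᵀ Ã(y,z) ). Then θ_A(x,y,z) = Σ_{j=0}^n Σ_{p=0}^s Σ_{q=0}^r x^{n−j} y^{2p} z^{2q} A^j_{p,q}, where A^j_{p,q} = Σ [A]_{X,Y}² with the sum over X ⊆ {1,…,m}, Y ⊆ {1,…,n} with |X| = |Y| = j, |X ∩ {1,…,s}| = p, and |Y ∩ {1,…,r}| = q. -/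
open Matrix

/-- The minor `[C]_{S,T}` : the determinant of the submatrix of `C` with rows indexed by
`S` and columns by `T` (in increasing order); junk value `0` if `|S| ≠ |T|`, and the empty
minor equals `1`. -/
noncomputable def minor {m n : ℕ} (C : Matrix (Fin m) (Fin n) ℝ)
    (S : Finset (Fin m)) (T : Finset (Fin n)) : ℝ :=
  if h : S.card = T.card then
    (Matrix.of fun (i j : Fin S.card) =>
      C (S.orderEmbOfFin rfl i) (T.orderEmbOfFin h.symm j)).det
  else 0

/-- `A^j_{p,q} = Σ [A]_{X,Y}²`, the sum over row sets `X` and column sets `Y` with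
`|X| = |Y| = j`, `|X ∩ {1,…,s}| = p` and `|Y ∩ {1,…,r}| = q`. -/
noncomputable def Apq {m n : ℕ} (A : Matrix (Fin m) (Fin n) ℝ) (s r j p q : ℕ) : ℝ :=
  ∑ X : Finset (Fin m), ∑ Y : Finset (Fin n),
    if X.card = j ∧ Y.card = j ∧
        (X.filter (fun i : Fin m => (i : ℕ) < s)).card = p ∧
        (Y.filter (fun i : Fin n => (i : ℕ) < r)).card = q then
      (minor A X Y) ^ 2
    else 0

/-- `Ã(y,z) = diag(y·I_s, I_{m−s}) · A · diag(z·I_r, I_{n−r})`. -/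
def Atilde {m n : ℕ} (A : Matrix (Fin m) (Fin n) ℝ) (s r : ℕ) (y z : ℝ) :
    Matrix (Fin m) (Fin n) ℝ :=
  Matrix.of fun i j =>
    (if (i : ℕ) < s then y else 1) * A i j * (if (j : ℕ) < r then z else 1)

/-! ### Auxiliary lemmas -/

lemma minor_eq_det {m n : ℕ} (C : Matrix (Fin m) (Fin n) ℝ)
    (X : Finset (Fin m)) (T : Finset (Fin n)) (h : X.card = T.card) :
    minor C X T = (C.submatrix (X.orderEmbOfFin h) (T.orderEmbOfFin rfl)).det := by
  rw [minor, dif_pos h]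
  rw [← Matrix.det_submatrix_equiv_self (finCongr h)
    (C.submatrix (X.orderEmbOfFin h) (T.orderEmbOfFin rfl))]
  congr 1

lemma det_piecewise_one {n : ℕ} (C : Matrix (Fin n) (Fin n) ℝ) (S : Finset (Fin n)) :
    Matrix.det (S.piecewise (1 : Matrix (Fin n) (Fin n) ℝ) C) =
      Matrix.det (C.submatrix (Sᶜ.orderEmbOfFin rfl) (Sᶜ.orderEmbOfFin rfl)) := by
  set M := S.piecewise (1 : Matrix (Fin n) (Fin n) ℝ) C with hM
  have hMS : ∀ i ∈ S, M i = (1 : Matrix (Fin n) (Fin n) ℝ) i :=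
    fun i hi => S.piecewise_eq_of_mem _ _ hi
  have hMC : ∀ i, i ∉ S → M i = C i := fun i hi => S.piecewise_eq_of_notMem _ _ hi
  have hz : ∀ i, (i ∈ S) → ∀ j, ¬(j ∈ S) → M i j = 0 := by
    intro i hi j hj
    rw [hMS i hi, Matrix.one_apply_ne]
    rintro rfl; exact hj hi
  rw [Matrix.twoBlockTriangular_det' M (fun i => i ∈ S) hz]
  have h1 : ∀ (de : DecidableEq {a : Fin n // a ∈ S}) (ft : Fintype {a : Fin n // a ∈ S}),
      @Matrix.det _ de ft _ _ (Matrix.toSquareBlockProp M fun i => i ∈ S) = 1 := by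
    intro de ft
    rw [Subsingleton.elim de (by infer_instance), Subsingleton.elim ft (by infer_instance)]
    let eS : Fin S.card ≃ {i : Fin n // i ∈ S} := (S.orderIsoOfFin rfl).toEquiv
    rw [← Matrix.det_submatrix_equiv_self eS (Matrix.toSquareBlockProp M fun i => i ∈ S)]
    have h1 : (Matrix.toSquareBlockProp M fun i => i ∈ S).submatrix eS eS = 1 := by
      ext a b
      erw [Matrix.submatrix_apply, Matrix.toSquareBlockProp_def, Matrix.of_apply,
        hMS (eS a).1 (eS a).2, Matrix.one_apply, Matrix.one_apply]
      simp only [← Subtype.ext_iff, EmbeddingLike.apply_eq_iff_eq]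
    rw [h1, Matrix.det_one]
  rw [h1, one_mul]
  have h2 : ∀ (de : DecidableEq {a : Fin n // ¬ a ∈ S}) (ft : Fintype {a : Fin n // ¬ a ∈ S}),
      @Matrix.det _ de ft _ _ (Matrix.toSquareBlockProp M fun i => ¬ i ∈ S)
        = Matrix.det (C.submatrix (Sᶜ.orderEmbOfFin rfl) (Sᶜ.orderEmbOfFin rfl)) := by
    intro de ft
    rw [Subsingleton.elim de (by infer_instance), Subsingleton.elim ft (by infer_instance)]
    let e : Fin (Sᶜ.card) ≃ {i : Fin n // ¬ i ∈ S} :=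
      (Sᶜ.orderIsoOfFin rfl).toEquiv.trans (Equiv.subtypeEquivRight (by
        intro x; simp [Finset.mem_compl]))
    have hval : ∀ i : Fin Sᶜ.card, ((e i : {i : Fin n // ¬ i ∈ S}) : Fin n)
        = Sᶜ.orderEmbOfFin rfl i := by
      intro i
      simp only [e, Equiv.trans_apply, Equiv.subtypeEquivRight_apply_coe]
      rfl
    rw [← Matrix.det_submatrix_equiv_self e (Matrix.toSquareBlockProp M fun i => ¬ i ∈ S)]
    congr 1
    ext i j
    erw [Matrix.submatrix_apply, Matrix.toSquareBlockProp_def, Matrix.of_apply,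
      hMC _ (e i).2, hval i, hval j]
    rfl
  rw [h2]

lemma detExpand {n : ℕ} (C : Matrix (Fin n) (Fin n) ℝ) (x : ℝ) :
    Matrix.det (x • (1 : Matrix (Fin n) (Fin n) ℝ) + C) =
      ∑ T : Finset (Fin n), x ^ (n - T.card) *
        Matrix.det (C.submatrix (T.orderEmbOfFin rfl) (T.orderEmbOfFin rfl)) := by
  have h0 : Matrix.det (x • (1 : Matrix (Fin n) (Fin n) ℝ) + C)
      = (Matrix.detRowAlternating : (Fin n → ℝ) [⋀^Fin n]→ₗ[ℝ] ℝ).toMultilinearMap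
        ((fun i => x • (1 : Matrix (Fin n) (Fin n) ℝ) i) + fun i => C i) := rfl
  rw [h0, MultilinearMap.map_add_univ]
  have key : ∀ S : Finset (Fin n),
      (Matrix.detRowAlternating : (Fin n → ℝ) [⋀^Fin n]→ₗ[ℝ] ℝ).toMultilinearMap
        (S.piecewise (fun i => x • (1 : Matrix (Fin n) (Fin n) ℝ) i) (fun i => C i))
      = x ^ S.card * Matrix.det (C.submatrix (Sᶜ.orderEmbOfFin rfl) (Sᶜ.orderEmbOfFin rfl)) := by
    intro S
    have hpw : S.piecewise (fun i => x • (1 : Matrix (Fin n) (Fin n) ℝ) i) (fun i => C i)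
        = S.piecewise (fun i => x • (S.piecewise (1 : Matrix (Fin n) (Fin n) ℝ) C) i)
            (S.piecewise (1 : Matrix (Fin n) (Fin n) ℝ) C) := by
      ext i j
      by_cases hi : i ∈ S <;>
        simp [Finset.piecewise, hi]
    rw [hpw, MultilinearMap.map_piecewise_smul]
    simp only [Finset.prod_const, smul_eq_mul]
    rw [show ((Matrix.detRowAlternating : (Fin n → ℝ) [⋀^Fin n]→ₗ[ℝ] ℝ).toMultilinearMap
        (S.piecewise (1 : Matrix (Fin n) (Fin n) ℝ) C))
        = Matrix.det (S.piecewise (1 : Matrix (Fin n) (Fin n) ℝ) C) from rfl]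
    rw [det_piecewise_one]
  rw [Finset.sum_congr rfl (fun S _ => key S)]
  let eC : Equiv.Perm (Finset (Fin n)) :=
    ⟨fun S => Sᶜ, fun S => Sᶜ, fun S => compl_compl S, fun S => compl_compl S⟩
  rw [← Equiv.sum_comp eC
    (fun T => x ^ (n - T.card) * Matrix.det (C.submatrix (T.orderEmbOfFin rfl) (T.orderEmbOfFin rfl)))]
  refine Finset.sum_congr rfl fun S _ => ?_
  simp only [eC, Equiv.coe_fn_mk]
  congr 2
  have hcle : S.card ≤ n := by
    have := Finset.card_le_univ S
    simpa [Finset.card_univ] using this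
  rw [Finset.card_compl]
  simp only [Fintype.card_fin]
  omega

lemma det_submatrix_col_sum {k mm : ℕ} (P : Matrix (Fin k) (Fin mm) ℝ)
    (Q : Matrix (Fin mm) (Fin k) ℝ) :
    Matrix.det (P * Q) =
      ∑ f : Fin k → Fin mm, (∏ i, Q (f i) i) * Matrix.det (P.submatrix id f) := by
  have h1 : Matrix.det (P * Q)
      = ∑ f : Fin k → Fin mm, ∑ σ : Equiv.Perm (Fin k),
          ((Equiv.Perm.sign σ : ℤ) : ℝ) * ∏ i, P (σ i) (f i) * Q (f i) i := by
    simp only [Matrix.det_apply', Matrix.mul_apply, Finset.prod_univ_sum, Finset.mul_sum,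
      Fintype.piFinset_univ]
    rw [Finset.sum_comm]
  rw [h1]
  refine Finset.sum_congr rfl fun f _ => ?_
  have h2 : Matrix.det (P.submatrix id f)
      = ∑ σ : Equiv.Perm (Fin k), ((Equiv.Perm.sign σ : ℤ) : ℝ) * ∏ i, P (σ i) (f i) := by
    rw [Matrix.det_apply']
    rfl
  rw [h2, Finset.mul_sum]
  refine Finset.sum_congr rfl fun σ _ => ?_
  rw [Finset.prod_mul_distrib]
  ring

lemma cauchyBinet {k mm : ℕ} (P : Matrix (Fin k) (Fin mm) ℝ)
    (Q : Matrix (Fin mm) (Fin k) ℝ) :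
    Matrix.det (P * Q) =
      ∑ X : Finset (Fin mm), if h : X.card = k then
        Matrix.det (P.submatrix id (X.orderEmbOfFin h)) *
        Matrix.det (Q.submatrix (X.orderEmbOfFin h) id) else 0 := by
  rw [det_submatrix_col_sum]
  have hstep : ∑ f : Fin k → Fin mm, (∏ i, Q (f i) i) * Matrix.det (P.submatrix id f)
      = ∑ f ∈ Finset.univ.filter (fun f : Fin k → Fin mm => Function.Injective f),
          (∏ i, Q (f i) i) * Matrix.det (P.submatrix id f) := by
    symm
    refine Finset.sum_subset (Finset.filter_subset _ _) ?_
    intro f _ hf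
    simp only [Finset.mem_filter, Finset.mem_univ, true_and] at hf
    rw [Function.not_injective_iff] at hf
    obtain ⟨a, b, hab, hne⟩ := hf
    have : Matrix.det (P.submatrix id f) = 0 :=
      Matrix.det_zero_of_column_eq hne (fun i => by simp [hab])
    rw [this, mul_zero]
  rw [hstep]
  rw [← Finset.sum_fiberwise_of_maps_to
    (g := fun f : Fin k → Fin mm => Finset.image f Finset.univ)
    (t := (Finset.univ : Finset (Finset (Fin mm))))
    (fun f _ => Finset.mem_univ _)
    (fun f => (∏ i, Q (f i) i) * Matrix.det (P.submatrix id f))]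
  refine Finset.sum_congr rfl fun X _ => ?_
  by_cases h : X.card = k
  · rw [dif_pos h]
    have himage : ∀ σ : Equiv.Perm (Fin k),
        Finset.image (fun i => X.orderEmbOfFin h (σ i)) Finset.univ = X := by
      intro σ
      ext a
      simp only [Finset.mem_image, Finset.mem_univ, true_and]
      constructor
      · rintro ⟨i, rfl⟩; exact Finset.orderEmbOfFin_mem _ _ _
      · intro ha
        have : a ∈ Set.range (X.orderEmbOfFin h) := by
          rw [Finset.range_orderEmbOfFin]; exact ha
        obtain ⟨j, rfl⟩ := this
        exact ⟨σ.symm j, by simp⟩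
    have hsum : ∑ f ∈ (Finset.univ.filter (fun f : Fin k → Fin mm => Function.Injective f)).filter
          (fun f => Finset.image f Finset.univ = X),
          (∏ i, Q (f i) i) * Matrix.det (P.submatrix id f)
        = ∑ σ : Equiv.Perm (Fin k),
          (∏ i, Q (X.orderEmbOfFin h (σ i)) i) *
            Matrix.det (P.submatrix id (fun i => X.orderEmbOfFin h (σ i))) := by
      symm
      refine Finset.sum_bij (fun σ _ => fun i => X.orderEmbOfFin h (σ i)) ?_ ?_ ?_ ?_
      · intro σ _
        simp only [Finset.mem_filter, Finset.mem_univ, true_and]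
        exact ⟨(X.orderEmbOfFin h).injective.comp σ.injective, himage σ⟩
      · intro σ _ τ _ hfun
        apply Equiv.ext
        intro i
        exact (X.orderEmbOfFin h).injective (by simpa using congrFun hfun i)
      · intro f hf
        simp only [Finset.mem_filter, Finset.mem_univ, true_and] at hf
        obtain ⟨hinj, him⟩ := hf
        have hmem : ∀ i, f i ∈ X := by
          intro i; rw [← him]; exact Finset.mem_image_of_mem _ (Finset.mem_univ i)
        let σ : Fin k → Fin k := fun i => (X.orderIsoOfFin h).symm ⟨f i, hmem i⟩
        have hσinj : Function.Injective σ := by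
          intro a b hab
          have := (X.orderIsoOfFin h).symm.injective hab
          exact hinj (Subtype.ext_iff.mp this)
        have hσbij : Function.Bijective σ := (Finite.injective_iff_bijective).mp hσinj
        refine ⟨Equiv.ofBijective σ hσbij, Finset.mem_univ _, ?_⟩
        funext i
        show X.orderEmbOfFin h ((X.orderIsoOfFin h).symm ⟨f i, hmem i⟩) = f i
        rw [← Finset.coe_orderIsoOfFin_apply, OrderIso.apply_symm_apply]
      · intro σ _; rfl
    rw [hsum]
    have hperm : ∀ σ : Equiv.Perm (Fin k),
        Matrix.det (P.submatrix id (fun i => X.orderEmbOfFin h (σ i)))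
          = ((Equiv.Perm.sign σ : ℤ) : ℝ) * Matrix.det (P.submatrix id (X.orderEmbOfFin h)) := by
      intro σ
      have : P.submatrix id (fun i => X.orderEmbOfFin h (σ i))
          = (P.submatrix id (X.orderEmbOfFin h)).submatrix id σ := by
        ext i j; rfl
      rw [this, Matrix.det_permute']
    have hQ : Matrix.det (Q.submatrix (X.orderEmbOfFin h) id)
        = ∑ σ : Equiv.Perm (Fin k),
            ((Equiv.Perm.sign σ : ℤ) : ℝ) * ∏ i, Q (X.orderEmbOfFin h (σ i)) i := by
      rw [Matrix.det_apply']
      rfl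
    rw [hQ, Finset.mul_sum]
    refine Finset.sum_congr rfl fun σ _ => ?_
    rw [hperm σ]
    ring
  · rw [dif_neg h]
    refine Finset.sum_eq_zero fun f hf => ?_
    simp only [Finset.mem_filter, Finset.mem_univ, true_and] at hf
    obtain ⟨hinj, him⟩ := hf
    exfalso
    apply h
    rw [← him, Finset.card_image_of_injective _ hinj, Finset.card_univ, Fintype.card_fin]

lemma prod_orderEmbOfFin' {n k : ℕ} (X : Finset (Fin n)) (h : X.card = k) (F : Fin n → ℝ) :
    ∏ i : Fin k, F (X.orderEmbOfFin h i) = ∏ x ∈ X, F x := by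
  rw [← Finset.prod_coe_sort X F]
  exact Fintype.prod_equiv (X.orderIsoOfFin h).toEquiv _ _ (fun i => by
    rw [← Finset.coe_orderIsoOfFin_apply]; rfl)

lemma prod_ite_pow {n : ℕ} (X : Finset (Fin n)) (p : Fin n → Prop) [DecidablePred p] (y : ℝ) :
    ∏ x ∈ X, (if p x then y else 1) = y ^ (X.filter p).card := by
  rw [Finset.prod_ite, Finset.prod_const, Finset.prod_const_one, mul_one]

lemma det_Atilde_sub {m n k : ℕ} (A : Matrix (Fin m) (Fin n) ℝ) (s r : ℕ) (y z : ℝ)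
    (f : Fin k → Fin m) (g : Fin k → Fin n) :
    Matrix.det ((Atilde A s r y z).submatrix f g) =
      (∏ i, (if ((f i : ℕ)) < s then y else 1)) * (∏ j, (if ((g j : ℕ)) < r then z else 1)) *
        Matrix.det (A.submatrix f g) := by
  have hmat : (Atilde A s r y z).submatrix f g
      = Matrix.of (fun i j => (if ((f i : ℕ)) < s then y else 1) *
          ((Matrix.of fun i j => (if ((g j : ℕ)) < r then z else 1) * (A.submatrix f g) i j) i j)) := by
    ext i j
    simp only [Matrix.submatrix_apply, Atilde, Matrix.of_apply]
    ring
  rw [hmat, Matrix.det_mul_column, Matrix.det_mul_row]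
  ring

lemma card_filter_lt_le {n s : ℕ} (X : Finset (Fin n)) :
    (X.filter (fun i : Fin n => (i : ℕ) < s)).card ≤ s := by
  have : ((X.filter (fun i : Fin n => (i : ℕ) < s)).image (fun i : Fin n => (i : ℕ)))
      ⊆ Finset.range s := by
    intro a ha
    simp only [Finset.mem_image, Finset.mem_filter] at ha
    obtain ⟨i, ⟨_, hlt⟩, rfl⟩ := ha
    exact Finset.mem_range.mpr hlt
  calc (X.filter (fun i : Fin n => (i : ℕ) < s)).card
      = ((X.filter (fun i : Fin n => (i : ℕ) < s)).image (fun i : Fin n => (i : ℕ))).card := by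
        rw [Finset.card_image_of_injective _ Fin.val_injective]
    _ ≤ (Finset.range s).card := Finset.card_le_card this
    _ = s := Finset.card_range s

lemma sum_comm5 {M : Type*} [AddCommMonoid M] {α₁ α₂ α₃ α₄ α₅ : Type*}
    (s₁ : Finset α₁) (s₂ : Finset α₂) (s₃ : Finset α₃) (s₄ : Finset α₄) (s₅ : Finset α₅)
    (f : α₁ → α₂ → α₃ → α₄ → α₅ → M) :
    (∑ a ∈ s₁, ∑ b ∈ s₂, ∑ c ∈ s₃, ∑ d ∈ s₄, ∑ e ∈ s₅, f a b c d e)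
      = ∑ e ∈ s₅, ∑ d ∈ s₄, ∑ a ∈ s₁, ∑ b ∈ s₂, ∑ c ∈ s₃, f a b c d e :=
  calc (∑ a ∈ s₁, ∑ b ∈ s₂, ∑ c ∈ s₃, ∑ d ∈ s₄, ∑ e ∈ s₅, f a b c d e)
      = ∑ a ∈ s₁, ∑ b ∈ s₂, ∑ c ∈ s₃, ∑ e ∈ s₅, ∑ d ∈ s₄, f a b c d e :=
        Finset.sum_congr rfl fun a _ => Finset.sum_congr rfl fun b _ =>
          Finset.sum_congr rfl fun c _ => Finset.sum_comm
    _ = ∑ a ∈ s₁, ∑ b ∈ s₂, ∑ e ∈ s₅, ∑ c ∈ s₃, ∑ d ∈ s₄, f a b c d e :=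
        Finset.sum_congr rfl fun a _ => Finset.sum_congr rfl fun b _ => Finset.sum_comm
    _ = ∑ a ∈ s₁, ∑ e ∈ s₅, ∑ b ∈ s₂, ∑ c ∈ s₃, ∑ d ∈ s₄, f a b c d e :=
        Finset.sum_congr rfl fun a _ => Finset.sum_comm
    _ = ∑ e ∈ s₅, ∑ a ∈ s₁, ∑ b ∈ s₂, ∑ c ∈ s₃, ∑ d ∈ s₄, f a b c d e := Finset.sum_comm
    _ = ∑ e ∈ s₅, ∑ a ∈ s₁, ∑ b ∈ s₂, ∑ d ∈ s₄, ∑ c ∈ s₃, f a b c d e :=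
        Finset.sum_congr rfl fun e _ => Finset.sum_congr rfl fun a _ =>
          Finset.sum_congr rfl fun b _ => Finset.sum_comm
    _ = ∑ e ∈ s₅, ∑ a ∈ s₁, ∑ d ∈ s₄, ∑ b ∈ s₂, ∑ c ∈ s₃, f a b c d e :=
        Finset.sum_congr rfl fun e _ => Finset.sum_congr rfl fun a _ => Finset.sum_comm
    _ = ∑ e ∈ s₅, ∑ d ∈ s₄, ∑ a ∈ s₁, ∑ b ∈ s₂, ∑ c ∈ s₃, f a b c d e :=
        Finset.sum_congr rfl fun e _ => Finset.sum_comm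

/-- **The trivariate characteristic polynomial as a generating function.**
`θ_A(x,y,z) = det(x·I + Ã(y,z)ᵀÃ(y,z)) = Σ_{j,p,q} x^{n−j} y^{2p} z^{2q} A^j_{p,q}`. -/
theorem trivariate_charpoly_generating_function
    (m n s r : ℕ) (hn : 1 ≤ n) (hmn : n ≤ m) (hsm : s ≤ m) (hrn : r ≤ n)
    (A : Matrix (Fin m) (Fin n) ℝ) :
    ∀ x y z : ℝ,
      Matrix.det (x • (1 : Matrix (Fin n) (Fin n) ℝ) +
          (Atilde A s r y z)ᵀ * Atilde A s r y z) =
      ∑ j ∈ Finset.range (n + 1), ∑ p ∈ Finset.range (s + 1), ∑ q ∈ Finset.range (r + 1),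
        x ^ (n - j) * y ^ (2 * p) * z ^ (2 * q) * Apq A s r j p q := by
  intro x y z
  set B := Atilde A s r y z with hB
  rw [detExpand]
  -- Step 1: rewrite each principal minor of BᵀB via Cauchy–Binet
  have step1 : ∀ T : Finset (Fin n),
      Matrix.det ((Bᵀ * B).submatrix (T.orderEmbOfFin rfl) (T.orderEmbOfFin rfl))
        = ∑ X : Finset (Fin m), if h : X.card = T.card then
            (y ^ ((X.filter (fun i : Fin m => (i : ℕ) < s)).card)
              * z ^ ((T.filter (fun i : Fin n => (i : ℕ) < r)).card)
              * minor A X T) ^ 2 else 0 := by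
    intro T
    have hsub : (Bᵀ * B).submatrix (T.orderEmbOfFin rfl) (T.orderEmbOfFin rfl)
        = (B.submatrix id (T.orderEmbOfFin rfl))ᵀ * (B.submatrix id (T.orderEmbOfFin rfl)) := by
      ext i j
      simp [Matrix.mul_apply]
    rw [hsub, cauchyBinet]
    refine Finset.sum_congr rfl fun X _ => ?_
    by_cases h : X.card = T.card
    · rw [dif_pos h, dif_pos h]
      have e1 : ((B.submatrix id (T.orderEmbOfFin rfl))ᵀ).submatrix id (X.orderEmbOfFin h)
          = (B.submatrix (X.orderEmbOfFin h) (T.orderEmbOfFin rfl))ᵀ := by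
        ext i j; rfl
      have e2 : (B.submatrix id (T.orderEmbOfFin rfl)).submatrix (X.orderEmbOfFin h) id
          = B.submatrix (X.orderEmbOfFin h) (T.orderEmbOfFin rfl) := by
        ext i j; rfl
      rw [e1, e2, Matrix.det_transpose, ← sq]
      congr 1
      rw [hB, det_Atilde_sub]
      have f1 : (∏ i : Fin T.card, if ((X.orderEmbOfFin h i : Fin m) : ℕ) < s then y else 1)
          = y ^ (X.filter (fun i : Fin m => (i : ℕ) < s)).card :=
        (prod_orderEmbOfFin' X h (fun a => if (a : ℕ) < s then y else 1)).trans
          (prod_ite_pow X _ y)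
      have f2 : (∏ i : Fin T.card, if ((T.orderEmbOfFin rfl i : Fin n) : ℕ) < r then z else 1)
          = z ^ (T.filter (fun i : Fin n => (i : ℕ) < r)).card :=
        (prod_orderEmbOfFin' T rfl (fun a => if (a : ℕ) < r then z else 1)).trans
          (prod_ite_pow T _ z)
      rw [f1, f2, ← minor_eq_det A X T h]
    · rw [dif_neg h, dif_neg h]
  rw [Finset.sum_congr rfl (fun T _ => by rw [step1 T])]
  -- Step 2: per (T, X), expand into the (j,p,q) triple sum
  have step2 : ∀ (T : Finset (Fin n)) (X : Finset (Fin m)),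
      (x ^ (n - T.card) * if h : X.card = T.card then
          (y ^ ((X.filter (fun i : Fin m => (i : ℕ) < s)).card)
            * z ^ ((T.filter (fun i : Fin n => (i : ℕ) < r)).card)
            * minor A X T) ^ 2 else 0)
      = ∑ j ∈ Finset.range (n + 1), ∑ p ∈ Finset.range (s + 1), ∑ q ∈ Finset.range (r + 1),
          (if X.card = j ∧ T.card = j ∧
              (X.filter (fun i : Fin m => (i : ℕ) < s)).card = p ∧
              (T.filter (fun i : Fin n => (i : ℕ) < r)).card = q then
            x ^ (n - j) * y ^ (2 * p) * z ^ (2 * q) * (minor A X T) ^ 2 else 0) := by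
    intro T X
    set pX := (X.filter (fun i : Fin m => (i : ℕ) < s)).card with hpX
    set qT := (T.filter (fun i : Fin n => (i : ℕ) < r)).card with hqT
    by_cases h : X.card = T.card
    · rw [dif_pos h]
      have hTn : T.card ≤ n := by
        have := Finset.card_le_univ T
        simpa [Finset.card_univ] using this
      have hps : pX ≤ s := card_filter_lt_le X
      have hqr : qT ≤ r := card_filter_lt_le T
      symm
      have c1 : (∑ j ∈ Finset.range (n + 1), ∑ p ∈ Finset.range (s + 1),
            ∑ q ∈ Finset.range (r + 1),
            (if X.card = j ∧ T.card = j ∧ pX = p ∧ qT = q then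
              x ^ (n - j) * y ^ (2 * p) * z ^ (2 * q) * (minor A X T) ^ 2 else 0))
          = ∑ p ∈ Finset.range (s + 1), ∑ q ∈ Finset.range (r + 1),
            (if X.card = T.card ∧ T.card = T.card ∧ pX = p ∧ qT = q then
              x ^ (n - T.card) * y ^ (2 * p) * z ^ (2 * q) * (minor A X T) ^ 2 else 0) := by
        refine Finset.sum_eq_single_of_mem T.card (Finset.mem_range.mpr (by omega)) ?_
        intro b _ hb
        refine Finset.sum_eq_zero fun p _ => Finset.sum_eq_zero fun q _ => ?_
        rw [if_neg]
        rintro ⟨-, h2, -⟩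
        exact hb h2.symm
      have c2 : (∑ p ∈ Finset.range (s + 1), ∑ q ∈ Finset.range (r + 1),
            (if X.card = T.card ∧ T.card = T.card ∧ pX = p ∧ qT = q then
              x ^ (n - T.card) * y ^ (2 * p) * z ^ (2 * q) * (minor A X T) ^ 2 else 0))
          = ∑ q ∈ Finset.range (r + 1),
            (if X.card = T.card ∧ T.card = T.card ∧ pX = pX ∧ qT = q then
              x ^ (n - T.card) * y ^ (2 * pX) * z ^ (2 * q) * (minor A X T) ^ 2 else 0) := by
        refine Finset.sum_eq_single_of_mem pX (Finset.mem_range.mpr (by omega)) ?_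
        intro b _ hb
        refine Finset.sum_eq_zero fun q _ => ?_
        rw [if_neg]
        rintro ⟨-, -, h3, -⟩
        exact hb h3.symm
      have c3 : (∑ q ∈ Finset.range (r + 1),
            (if X.card = T.card ∧ T.card = T.card ∧ pX = pX ∧ qT = q then
              x ^ (n - T.card) * y ^ (2 * pX) * z ^ (2 * q) * (minor A X T) ^ 2 else 0))
          = x ^ (n - T.card) * y ^ (2 * pX) * z ^ (2 * qT) * (minor A X T) ^ 2 := by
        refine (Finset.sum_eq_single_of_mem qT (Finset.mem_range.mpr (by omega)) ?_).trans ?_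
        · intro b _ hb
          rw [if_neg]
          rintro ⟨-, -, -, h4⟩
          exact hb h4.symm
        · rw [if_pos ⟨h, rfl, rfl, rfl⟩]
      rw [c1, c2, c3]
      rw [mul_pow, mul_pow, ← pow_mul, ← pow_mul, mul_comm pX 2, mul_comm qT 2]
      ring
    · rw [dif_neg h, mul_zero]
      symm
      refine Finset.sum_eq_zero fun j _ => Finset.sum_eq_zero fun p _ =>
        Finset.sum_eq_zero fun q _ => ?_
      rw [if_neg]
      rintro ⟨h1, h2, -⟩
      exact h (h1.trans h2.symm)
  have step2' : ∀ T : Finset (Fin n),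
      (x ^ (n - T.card) * ∑ X : Finset (Fin m), if h : X.card = T.card then
          (y ^ ((X.filter (fun i : Fin m => (i : ℕ) < s)).card)
            * z ^ ((T.filter (fun i : Fin n => (i : ℕ) < r)).card)
            * minor A X T) ^ 2 else 0)
      = ∑ X : Finset (Fin m),
        ∑ j ∈ Finset.range (n + 1), ∑ p ∈ Finset.range (s + 1), ∑ q ∈ Finset.range (r + 1),
          (if X.card = j ∧ T.card = j ∧
              (X.filter (fun i : Fin m => (i : ℕ) < s)).card = p ∧
              (T.filter (fun i : Fin n => (i : ℕ) < r)).card = q then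
            x ^ (n - j) * y ^ (2 * p) * z ^ (2 * q) * (minor A X T) ^ 2 else 0) := by
    intro T
    rw [Finset.mul_sum]
    exact Finset.sum_congr rfl fun X _ => step2 T X
  rw [Finset.sum_congr rfl (fun T _ => step2' T)]
  -- Step 3: reorganize the RHS
  have rhs1 : ∀ j p q : ℕ, x ^ (n - j) * y ^ (2 * p) * z ^ (2 * q) * Apq A s r j p q
      = ∑ X : Finset (Fin m), ∑ Y : Finset (Fin n),
        (if X.card = j ∧ Y.card = j ∧
            (X.filter (fun i : Fin m => (i : ℕ) < s)).card = p ∧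
            (Y.filter (fun i : Fin n => (i : ℕ) < r)).card = q then
          x ^ (n - j) * y ^ (2 * p) * z ^ (2 * q) * (minor A X Y) ^ 2 else 0) := by
    intro j p q
    unfold Apq
    rw [Finset.mul_sum]
    refine Finset.sum_congr rfl fun X _ => ?_
    rw [Finset.mul_sum]
    refine Finset.sum_congr rfl fun Y _ => ?_
    rw [mul_ite, mul_zero]
  rw [Finset.sum_congr rfl (fun j _ => Finset.sum_congr rfl (fun p _ =>
    Finset.sum_congr rfl (fun q _ => rhs1 j p q)))]
  -- now both sides are 5-fold sums of the same summand; commute the sums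
  rw [show (∑ j ∈ Finset.range (n + 1), ∑ p ∈ Finset.range (s + 1), ∑ q ∈ Finset.range (r + 1),
      ∑ X : Finset (Fin m), ∑ Y : Finset (Fin n),
        (if X.card = j ∧ Y.card = j ∧
            (X.filter (fun i : Fin m => (i : ℕ) < s)).card = p ∧
            (Y.filter (fun i : Fin n => (i : ℕ) < r)).card = q then
          x ^ (n - j) * y ^ (2 * p) * z ^ (2 * q) * (minor A X Y) ^ 2 else 0))
      = ∑ Y : Finset (Fin n), ∑ X : Finset (Fin m),
        ∑ j ∈ Finset.range (n + 1), ∑ p ∈ Finset.range (s + 1), ∑ q ∈ Finset.range (r + 1),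
        (if X.card = j ∧ Y.card = j ∧
            (X.filter (fun i : Fin m => (i : ℕ) < s)).card = p ∧
            (Y.filter (fun i : Fin n => (i : ℕ) < r)).card = q then
          x ^ (n - j) * y ^ (2 * p) * z ^ (2 * q) * (minor A X Y) ^ 2 else 0) from
    sum_comm5 _ _ _ _ _ _]
end

section
/- For all n×n real matrices A and B, det(A + B) = Σ (−1)^{‖S‖₁ + ‖T‖₁} [A]_{S,T} · [B]_{{1,…,n}∖S, {1,…,n}∖T}, where the sum is over all pairs of subsets S, T ⊆ {1,…,n} with |S| = |T|, and ‖X‖₁ denotes the sum of the elements of the set X. -/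
open Matrix

namespace DetAdd

open Finset Equiv


variable {n : ℕ}

lemma sign_eq_signAux (f : Equiv.Perm (Fin n)) : Equiv.Perm.sign f = Equiv.Perm.signAux f := by
  refine Equiv.Perm.swap_induction_on f ?_ ?_
  · simp [Equiv.Perm.signAux_one]
  · intro f x y hxy ih
    rw [Equiv.Perm.signAux_mul, Equiv.Perm.sign_mul, ih,
      Equiv.Perm.sign_swap hxy, Equiv.Perm.signAux_swap hxy]

lemma signAux_eq_pow (f : Equiv.Perm (Fin n)) :
    Equiv.Perm.signAux f =
      (-1 : ℤˣ) ^ (((Equiv.Perm.finPairsLT n).filter fun x => f x.1 ≤ f x.2).card) := by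
  rw [Equiv.Perm.signAux, Finset.prod_ite, Finset.prod_const, Finset.prod_const, one_pow, mul_one]

lemma image_orderEmbOfFin (S : Finset (Fin n)) :
    Finset.image (⇑(S.orderEmbOfFin rfl)) Finset.univ = S := by
  apply Finset.coe_injective
  rw [Finset.coe_image, Finset.coe_univ, Set.image_univ, Finset.range_orderEmbOfFin]

lemma card_filter_lt_orderEmbOfFin (S : Finset (Fin n)) (i : Fin S.card) :
    (S.filter (· < S.orderEmbOfFin rfl i)).card = (i : ℕ) := by
  classical
  rw [← Fin.card_Iio i]
  symm
  apply Finset.card_bij (fun (j : Fin S.card) _ => S.orderEmbOfFin rfl j)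
  · intro j hj
    simp only [Finset.mem_filter, Finset.mem_Iio] at hj ⊢
    exact ⟨S.orderEmbOfFin_mem rfl j, (S.orderEmbOfFin rfl).strictMono hj⟩
  · intro a _ b _ hab
    exact (S.orderEmbOfFin rfl).injective hab
  · intro s hs
    simp only [Finset.mem_filter] at hs
    obtain ⟨hsS, hlt⟩ := hs
    have : s ∈ Finset.image (⇑(S.orderEmbOfFin rfl)) Finset.univ := by
      rw [image_orderEmbOfFin]; exact hsS
    obtain ⟨j, _, rfl⟩ := Finset.mem_image.mp this
    exact ⟨j, Finset.mem_Iio.2 ((S.orderEmbOfFin rfl).strictMono.lt_iff_lt.mp hlt), rfl⟩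

lemma sum_card_filter_lt (S : Finset (Fin n)) :
    ∑ s ∈ S, (S.filter (· < s)).card = ∑ i : Fin S.card, (i : ℕ) := by
  classical
  symm
  refine Finset.sum_bij (fun i _ => S.orderEmbOfFin rfl i)
    (fun i _ => S.orderEmbOfFin_mem rfl i)
    (fun a _ b _ h => (S.orderEmbOfFin rfl).injective h) ?_ ?_
  · intro s hs
    have : s ∈ Finset.image (⇑(S.orderEmbOfFin rfl)) Finset.univ := by
      rw [image_orderEmbOfFin]; exact hs
    obtain ⟨j, _, rfl⟩ := Finset.mem_image.mp this
    exact ⟨j, Finset.mem_univ j, rfl⟩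
  · intro i _
    exact (card_filter_lt_orderEmbOfFin S i).symm


variable {n : ℕ}

/-- The equivalence `Fin S.card ⊕ Fin Sᶜ.card ≃ Fin n` listing first the elements of `S`
in increasing order, then those of `Sᶜ`. -/
noncomputable def eS (S : Finset (Fin n)) : Fin S.card ⊕ Fin Sᶜ.card ≃ Fin n :=
  (Equiv.sumCongr (S.orderIsoOfFin rfl).toEquiv (Sᶜ.orderIsoOfFin rfl).toEquiv).trans
    ((Equiv.sumCongr (Equiv.refl _)
      (Equiv.subtypeEquivRight (fun _ => Finset.mem_compl))).trans
      (Equiv.sumCompl (· ∈ S)))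

lemma eS_inl (S : Finset (Fin n)) (i : Fin S.card) :
    eS S (Sum.inl i) = S.orderEmbOfFin rfl i := rfl

lemma eS_inr (S : Finset (Fin n)) (j : Fin Sᶜ.card) :
    eS S (Sum.inr j) = Sᶜ.orderEmbOfFin rfl j := rfl

lemma hcard (S : Finset (Fin n)) : S.card + Sᶜ.card = n := by
  rw [Finset.card_add_card_compl, Fintype.card_fin]

lemma hcard_compl {S T : Finset (Fin n)} (h : S.card = T.card) : Sᶜ.card = Tᶜ.card := by
  have := hcard S; have := hcard T; omega

/-- The shuffle permutation associated to `S`. -/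
noncomputable def pS (S : Finset (Fin n)) : Equiv.Perm (Fin n) :=
  (finCongr (hcard S).symm).trans (finSumFinEquiv.symm.trans (eS S))

lemma pS_apply_lt (S : Finset (Fin n)) (x : Fin n) (hx : (x : ℕ) < S.card) :
    pS S x = S.orderEmbOfFin rfl ⟨x, hx⟩ := by
  have : finCongr (hcard S).symm x = Fin.castAdd Sᶜ.card ⟨x, hx⟩ := by
    ext; simp
  rw [pS, Equiv.trans_apply, Equiv.trans_apply, this,
    finSumFinEquiv_symm_apply_castAdd, eS_inl]

lemma pS_apply_ge (S : Finset (Fin n)) (x : Fin n) (hx : ¬ (x : ℕ) < S.card) :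
    pS S x = Sᶜ.orderEmbOfFin rfl ⟨(x : ℕ) - S.card, by have := hcard S; omega⟩ := by
  have : finCongr (hcard S).symm x
      = Fin.natAdd S.card ⟨(x : ℕ) - S.card, by have := hcard S; omega⟩ := by
    ext; simp; omega
  rw [pS, Equiv.trans_apply, Equiv.trans_apply, this,
    finSumFinEquiv_symm_apply_natAdd, eS_inr]

lemma pS_mem_iff (S : Finset (Fin n)) (x : Fin n) : pS S x ∈ S ↔ (x : ℕ) < S.card := by
  by_cases hx : (x : ℕ) < S.card
  · simp [pS_apply_lt S x hx, Finset.orderEmbOfFin_mem, hx]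
  · rw [pS_apply_ge S x hx]
    simp only [hx, iff_false]
    have := Finset.orderEmbOfFin_mem Sᶜ rfl ⟨(x : ℕ) - S.card, by have := hcard S; omega⟩
    rw [Finset.mem_compl] at this
    exact this



lemma pS_strictMono_low (S : Finset (Fin n)) {x y : Fin n} (hx : (x : ℕ) < S.card)
    (hy : (y : ℕ) < S.card) (hxy : x < y) : pS S x < pS S y := by
  rw [pS_apply_lt S x hx, pS_apply_lt S y hy]
  exact (S.orderEmbOfFin rfl).strictMono hxy

lemma pS_strictMono_high (S : Finset (Fin n)) {x y : Fin n} (hx : ¬ (x : ℕ) < S.card)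
    (hy : ¬ (y : ℕ) < S.card) (hxy : x < y) : pS S x < pS S y := by
  rw [pS_apply_ge S x hx, pS_apply_ge S y hy]
  refine (Sᶜ.orderEmbOfFin rfl).strictMono ?_
  have : (x : ℕ) < (y : ℕ) := hxy
  simp only [Fin.mk_lt_mk]
  omega

lemma sign_pS (S : Finset (Fin n)) :
    Equiv.Perm.sign (pS S) = (-1 : ℤˣ) ^ (∑ s ∈ S, (Sᶜ.filter (· < s)).card) := by
  classical
  rw [sign_eq_signAux, signAux_eq_pow]
  congr 1
  set p := pS S with hp
  -- the set of inversions
  have hinj := (pS S).injective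
  rw [show (∑ s ∈ S, (Sᶜ.filter (· < s)).card)
      = ((S ×ˢ Sᶜ).filter fun y => y.2 < y.1).card from ?_]
  · apply Finset.card_bij (fun x _ => (p x.2, p x.1))
    · intro x hx
      simp only [Finset.mem_filter, Equiv.Perm.mem_finPairsLT] at hx
      obtain ⟨h1, h2⟩ := hx
      have hne : p x.1 ≠ p x.2 := fun h => absurd (hinj h) (ne_of_gt h1)
      have hlt : p x.1 < p x.2 := lt_of_le_of_ne h2 hne
      have hx2 : (x.2 : ℕ) < S.card := by
        by_contra h2c
        have hx1 : ¬ (x.1 : ℕ) < S.card := by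
          have : (x.2 : ℕ) < (x.1 : ℕ) := h1
          omega
        exact absurd (pS_strictMono_high S h2c hx1 h1) (not_lt.2 (le_of_lt hlt))
      have hx1 : ¬ (x.1 : ℕ) < S.card := by
        by_contra h1c
        exact absurd (pS_strictMono_low S hx2 h1c h1) (not_lt.2 (le_of_lt hlt))
      simp only [Finset.mem_filter, Finset.mem_product]
      refine ⟨⟨(pS_mem_iff S x.2).2 hx2, ?_⟩, hlt⟩
      rw [Finset.mem_compl]
      exact fun hmem => hx1 ((pS_mem_iff S x.1).1 hmem)
    · intro a ha b hb hab
      simp only [Prod.mk.injEq] at hab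
      have h1 := hinj hab.1
      have h2 := hinj hab.2
      exact Sigma.ext (by rw [h2]) (by rw [h1])
    · rintro ⟨s, c⟩ hy
      simp only [Finset.mem_filter, Finset.mem_product] at hy
      obtain ⟨⟨hs, hc⟩, hlt⟩ := hy
      refine ⟨⟨p.symm c, p.symm s⟩, ?_, ?_⟩
      · have hps : p (p.symm s) = s := p.apply_symm_apply s
        have hpc : p (p.symm c) = c := p.apply_symm_apply c
        have h1 : ((p.symm s : Fin n) : ℕ) < S.card := by
          rw [← pS_mem_iff S (p.symm s), hp] at *
          rw [hps]; exact hs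
        have h2 : ¬ ((p.symm c : Fin n) : ℕ) < S.card := by
          rw [Finset.mem_compl] at hc
          intro hcon
          exact hc (by rw [← hpc]; exact (pS_mem_iff S _).2 hcon)
        simp only [Finset.mem_filter, Equiv.Perm.mem_finPairsLT]
        constructor
        · exact Fin.lt_def.2 (by omega)
        · rw [hps, hpc]; exact le_of_lt hlt
      · simp only [Equiv.apply_symm_apply]
  · -- card of inversion set as a sum
    rw [Finset.card_eq_sum_card_fiberwise
      (f := fun (y : Fin n × Fin n) => y.1) (t := S)
      (fun y hy => by
        simp only [Finset.mem_coe, Finset.mem_filter, Finset.mem_product] at hy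
        exact hy.1.1)]
    refine Finset.sum_congr rfl fun s hs => ?_
    symm
    apply Finset.card_bij (fun (y : Fin n × Fin n) _ => y.2)
    · intro y hy
      simp only [Finset.mem_filter, Finset.mem_product] at hy
      obtain ⟨⟨⟨_, hc⟩, hlt⟩, heq⟩ := hy
      simp only [Finset.mem_filter]
      exact ⟨hc, heq ▸ hlt⟩
    · intro a ha b hb hab
      simp only [Finset.mem_filter] at ha hb
      have : a.1 = s := ha.2
      have hb1 : b.1 = s := hb.2
      exact Prod.ext (by rw [this, hb1]) hab
    · intro c hc
      simp only [Finset.mem_filter] at hc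
      exact ⟨(s, c), by
        simp only [Finset.mem_filter, Finset.mem_product]
        simp [hs, hc.1, hc.2], rfl⟩

lemma sign_pS_mul {S T : Finset (Fin n)} (h : S.card = T.card) :
    ((Equiv.Perm.sign (pS S) * Equiv.Perm.sign (pS T) : ℤˣ) : ℤ)
      = (-1 : ℤ) ^ ((∑ i ∈ S, (i : ℕ)) + ∑ j ∈ T, (j : ℕ)) := by
  classical
  have key : ∀ (U : Finset (Fin n)),
      (∑ s ∈ U, (Uᶜ.filter (· < s)).card) + (∑ s ∈ U, (U.filter (· < s)).card)
        = ∑ s ∈ U, (s : ℕ) := by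
    intro U
    rw [← Finset.sum_add_distrib]
    refine Finset.sum_congr rfl fun s _ => ?_
    have e1 : Uᶜ.filter (· < s) = (Finset.Iio s).filter (· ∉ U) := by
      ext c; simp [Finset.mem_compl, and_comm]
    have e2 : U.filter (· < s) = (Finset.Iio s).filter (· ∈ U) := by
      ext c; simp [and_comm]
    rw [e1, e2, add_comm, Finset.card_filter_add_card_filter_not, Fin.card_Iio]
  rw [sign_pS, sign_pS, ← pow_add]
  set a := ∑ s ∈ S, (Sᶜ.filter (· < s)).card
  set b := ∑ s ∈ T, (Tᶜ.filter (· < s)).card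
  have hK : (∑ s ∈ S, (S.filter (· < s)).card) = ∑ s ∈ T, (T.filter (· < s)).card := by
    rw [sum_card_filter_lt, sum_card_filter_lt, h]
  set K := ∑ s ∈ S, (S.filter (· < s)).card with hKdef
  have hsum : a + K + (b + K) = (∑ i ∈ S, (i : ℕ)) + ∑ j ∈ T, (j : ℕ) := by
    rw [hKdef]
    have := key S
    have := key T
    rw [hK] at *
    omega
  have : ((∑ i ∈ S, (i : ℕ)) + ∑ j ∈ T, (j : ℕ)) = a + b + 2 * K := by omega
  rw [this, Units.val_pow_eq_pow_val]
  simp [pow_add, pow_mul]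


/-- The permutation of `Fin n` built from `σ` on `S → T` and `τ` on `Sᶜ → Tᶜ`. -/
noncomputable def Phi (S T : Finset (Fin n)) (h : S.card = T.card)
    (σ : Equiv.Perm (Fin S.card)) (τ : Equiv.Perm (Fin Sᶜ.card)) : Equiv.Perm (Fin n) :=
  (eS S).symm.trans ((Equiv.sumCongr σ τ).trans
    ((Equiv.sumCongr (finCongr h) (finCongr (hcard_compl h))).trans (eS T)))

lemma Phi_apply_inl (S T : Finset (Fin n)) (h : S.card = T.card)
    (σ : Equiv.Perm (Fin S.card)) (τ : Equiv.Perm (Fin Sᶜ.card)) (i : Fin S.card) :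
    Phi S T h σ τ (S.orderEmbOfFin rfl i) = T.orderEmbOfFin h.symm (σ i) := by
  have h1 : (eS S).symm (S.orderEmbOfFin rfl i) = Sum.inl i := by
    rw [← eS_inl]; exact (eS S).symm_apply_apply _
  rw [Phi, Equiv.trans_apply, h1]
  show eS T (Sum.inl (finCongr h (σ i))) = _
  rw [eS_inl]
  exact Finset.orderEmbOfFin_eq_orderEmbOfFin_iff.2 (by simp)

lemma Phi_apply_inr (S T : Finset (Fin n)) (h : S.card = T.card)
    (σ : Equiv.Perm (Fin S.card)) (τ : Equiv.Perm (Fin Sᶜ.card)) (j : Fin Sᶜ.card) :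
    Phi S T h σ τ (Sᶜ.orderEmbOfFin rfl j) = Tᶜ.orderEmbOfFin (hcard_compl h).symm (τ j) := by
  have h1 : (eS S).symm (Sᶜ.orderEmbOfFin rfl j) = Sum.inr j := by
    rw [← eS_inr]; exact (eS S).symm_apply_apply _
  rw [Phi, Equiv.trans_apply, h1]
  show eS T (Sum.inr (finCongr (hcard_compl h) (τ j))) = _
  rw [eS_inr]
  exact Finset.orderEmbOfFin_eq_orderEmbOfFin_iff.2 (by simp)

lemma sign_Phi (S T : Finset (Fin n)) (h : S.card = T.card)
    (σ : Equiv.Perm (Fin S.card)) (τ : Equiv.Perm (Fin Sᶜ.card)) :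
    ((Equiv.Perm.sign (Phi S T h σ τ) : ℤ) : ℝ) =
      (-1 : ℝ) ^ ((∑ i ∈ S, (i : ℕ)) + ∑ j ∈ T, (j : ℕ)) *
        ((Equiv.Perm.sign σ : ℤ) : ℝ) * ((Equiv.Perm.sign τ : ℤ) : ℝ) := by
  classical
  set e : Fin S.card ⊕ Fin Sᶜ.card ≃ Fin n := finSumFinEquiv.trans (finCongr (hcard S)) with he
  have key : ∀ z, ((pS T)⁻¹ * (Phi S T h σ τ) * pS S) (e z)
      = e ((Equiv.sumCongr σ τ) z) := by
    intro z
    have h1 : pS S (e z) = eS S z := by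
      simp [pS, he, Equiv.trans_apply]
    have h2 : Phi S T h σ τ (eS S z) =
        eS T ((Equiv.sumCongr (finCongr h) (finCongr (hcard_compl h)))
          ((Equiv.sumCongr σ τ) z)) := by
      rw [Phi]
      simp [Equiv.trans_apply]
    have h3 : ∀ w : Fin S.card ⊕ Fin Sᶜ.card,
        (pS T)⁻¹ (eS T ((Equiv.sumCongr (finCongr h) (finCongr (hcard_compl h))) w))
          = finCongr (hcard S) (finSumFinEquiv w) := by
      intro w
      have : (pS T)⁻¹ = (eS T).symm.trans (finSumFinEquiv.trans (finCongr (hcard T))) := rfl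
      rw [this]
      simp only [Equiv.trans_apply, Equiv.symm_apply_apply]
      apply Fin.ext
      cases w with
      | inl i => simp
      | inr j => simp [h]
    rw [Equiv.Perm.mul_apply, Equiv.Perm.mul_apply, h1, h2, h3]
    simp [he, Equiv.trans_apply]
  have E1 : Equiv.Perm.sign σ * Equiv.Perm.sign τ =
      Equiv.Perm.sign (pS T) * Equiv.Perm.sign (Phi S T h σ τ) * Equiv.Perm.sign (pS S) := by
    have := Equiv.Perm.sign_eq_sign_of_equiv (Equiv.sumCongr σ τ)
      ((pS T)⁻¹ * (Phi S T h σ τ) * pS S) e (fun z => (key z).symm)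
    rw [Equiv.Perm.sign_sumCongr] at this
    rw [this, Equiv.Perm.sign_mul, Equiv.Perm.sign_mul, Equiv.Perm.sign_inv]
  -- now pass to ℝ
  have cast1 : ((Equiv.Perm.sign σ : ℤ) : ℝ) * ((Equiv.Perm.sign τ : ℤ) : ℝ)
      = ((Equiv.Perm.sign (pS T) : ℤ) : ℝ) * ((Equiv.Perm.sign (Phi S T h σ τ) : ℤ) : ℝ)
        * ((Equiv.Perm.sign (pS S) : ℤ) : ℝ) := by
    have := congrArg (fun u : ℤˣ => ((u : ℤ) : ℝ)) E1
    simpa [Units.val_mul] using this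
  have hprod : ((Equiv.Perm.sign (pS S) : ℤ) : ℝ) * ((Equiv.Perm.sign (pS T) : ℤ) : ℝ)
      = (-1 : ℝ) ^ ((∑ i ∈ S, (i : ℕ)) + ∑ j ∈ T, (j : ℕ)) := by
    have := congrArg (fun z : ℤ => (z : ℝ)) (sign_pS_mul h)
    simpa [Units.val_mul] using this
  have hS2 : ((Equiv.Perm.sign (pS S) : ℤ) : ℝ) * ((Equiv.Perm.sign (pS S) : ℤ) : ℝ) = 1 := by
    rcases Int.units_eq_one_or (Equiv.Perm.sign (pS S)) with hu | hu <;> simp [hu]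
  have hT2 : ((Equiv.Perm.sign (pS T) : ℤ) : ℝ) * ((Equiv.Perm.sign (pS T) : ℤ) : ℝ) = 1 := by
    rcases Int.units_eq_one_or (Equiv.Perm.sign (pS T)) with hu | hu <;> simp [hu]
  set sS := ((Equiv.Perm.sign (pS S) : ℤ) : ℝ)
  set sT := ((Equiv.Perm.sign (pS T) : ℤ) : ℝ)
  set sP := ((Equiv.Perm.sign (Phi S T h σ τ) : ℤ) : ℝ)
  set sσ := ((Equiv.Perm.sign σ : ℤ) : ℝ)
  set sτ := ((Equiv.Perm.sign τ : ℤ) : ℝ)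
  calc sP = (sT * sT) * sP * (sS * sS) := by rw [hT2, hS2]; ring
    _ = (sS * sT) * (sT * sP * sS) := by ring
    _ = (sS * sT) * (sσ * sτ) := by rw [← cast1]
    _ = _ := by rw [hprod]; ring


lemma det_eq_sum (M : Matrix (Fin n) (Fin n) ℝ) :
    M.det = ∑ π : Equiv.Perm (Fin n),
      ((Equiv.Perm.sign π : ℤ) : ℝ) * ∏ i, M i (π i) := by
  rw [← Matrix.det_transpose, Matrix.det_apply']
  simp [Matrix.transpose_apply]

lemma prod_orderEmbOfFin (S : Finset (Fin n)) (g : Fin n → ℝ) :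
    ∏ s ∈ S, g s = ∏ i : Fin S.card, g (S.orderEmbOfFin rfl i) := by
  conv_lhs => rw [← image_orderEmbOfFin S]
  rw [Finset.prod_image (fun x _ y _ hxy => (S.orderEmbOfFin rfl).injective hxy)]

lemma minor_expand {S T : Finset (Fin n)} (h : S.card = T.card)
    (A : Matrix (Fin n) (Fin n) ℝ) :
    minor A S T = ∑ σ : Equiv.Perm (Fin S.card), ((Equiv.Perm.sign σ : ℤ) : ℝ) *
      ∏ i, A (S.orderEmbOfFin rfl i) (T.orderEmbOfFin h.symm (σ i)) := by
  rw [minor, dif_pos h, det_eq_sum]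
  rfl

lemma det_piecewise (S : Finset (Fin n)) (A B : Matrix (Fin n) (Fin n) ℝ) :
    Matrix.det (S.piecewise A B) =
      ∑ T : Finset (Fin n),
        if S.card = T.card then
          (-1 : ℝ) ^ ((∑ i ∈ S, (i : ℕ)) + ∑ j ∈ T, (j : ℕ)) *
            minor A S T * minor B Sᶜ Tᶜ
        else 0 := by
  classical
  refine (det_eq_sum _).trans ?_
  have hterm : ∀ π : Equiv.Perm (Fin n),
      (∏ i, (S.piecewise A B) i (π i)) =
        (∏ i ∈ S, A i (π i)) * ∏ i ∈ Sᶜ, B i (π i) := by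
    intro π
    have key : ∀ i, (S.piecewise A B) i (π i)
        = (S.piecewise (fun i => A i (π i)) (fun i => B i (π i))) i := by
      intro i
      by_cases hi : i ∈ S <;> simp [Finset.piecewise, hi]
    rw [Finset.prod_congr rfl (fun i _ => key i), Finset.prod_piecewise,
      Finset.univ_inter, ← Finset.compl_eq_univ_sdiff]
  rw [← Finset.sum_fiberwise_of_maps_to
    (g := fun π : Equiv.Perm (Fin n) => S.image ⇑π)
    (t := (Finset.univ : Finset (Finset (Fin n)))) (fun π _ => Finset.mem_univ _)
    (fun π => ((Equiv.Perm.sign π : ℤ) : ℝ) * ∏ i, (S.piecewise A B) i (π i))]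
  refine Finset.sum_congr rfl fun T _ => ?_
  by_cases hc : S.card = T.card
  · rw [if_pos hc]
    have hc' : Sᶜ.card = Tᶜ.card := hcard_compl hc
    rw [minor_expand hc A, minor_expand hc' B]
    simp only [Finset.mul_sum, Finset.sum_mul]
    rw [← Finset.sum_product']
    symm
    refine Finset.sum_bij (fun (στ : Equiv.Perm (Fin Sᶜ.card) × Equiv.Perm (Fin S.card)) _ =>
      Phi S T hc στ.2 στ.1) ?_ ?_ ?_ ?_
    · -- maps to the fiber
      rintro ⟨τ, σ⟩ -
      simp only [Finset.mem_filter, Finset.mem_univ, true_and]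
      have hsub : S.image ⇑(Phi S T hc σ τ) ⊆ T := by
        intro t ht
        obtain ⟨s, hs, rfl⟩ := Finset.mem_image.mp ht
        have hsi : s ∈ Finset.image (⇑(S.orderEmbOfFin rfl)) Finset.univ := by
          rw [image_orderEmbOfFin]; exact hs
        obtain ⟨i, _, rfl⟩ := Finset.mem_image.mp hsi
        rw [Phi_apply_inl]
        exact T.orderEmbOfFin_mem hc.symm _
      refine Finset.eq_of_subset_of_card_le hsub ?_
      rw [Finset.card_image_of_injective _ (Phi S T hc σ τ).injective, ← hc]
    · -- injectivity
      intro a _ b _ hPhi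
      have h1 : a.2 = b.2 := by
        ext i
        have hh := congrArg (fun f : Equiv.Perm (Fin n) => f (S.orderEmbOfFin rfl i)) hPhi
        simp only [Phi_apply_inl] at hh
        exact Finset.orderEmbOfFin_eq_orderEmbOfFin_iff.1 hh
      have h2 : a.1 = b.1 := by
        ext j
        have hh := congrArg (fun f : Equiv.Perm (Fin n) => f (Sᶜ.orderEmbOfFin rfl j)) hPhi
        simp only [Phi_apply_inr] at hh
        exact Finset.orderEmbOfFin_eq_orderEmbOfFin_iff.1 hh
      exact Prod.ext h2 h1
    · -- surjectivity
      intro π hπ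
      simp only [Finset.mem_filter, Finset.mem_univ, true_and] at hπ
      have hmem1 : ∀ x, x ∈ S → π x ∈ T := fun x hx => hπ ▸ Finset.mem_image_of_mem _ hx
      have hmem2 : ∀ x, x ∉ S → π x ∉ T := by
        intro x hx hmem
        rw [← hπ] at hmem
        obtain ⟨y, hy, hxy⟩ := Finset.mem_image.mp hmem
        exact hx (π.injective hxy ▸ hy)
      have hmem1' : ∀ y, y ∈ T → π.symm y ∈ S := by
        intro y hy
        by_contra hns
        exact hmem2 _ hns (by rwa [Equiv.apply_symm_apply])
      have hmem2' : ∀ y, y ∈ Tᶜ → π.symm y ∈ Sᶜ := by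
        intro y hy
        rw [Finset.mem_compl] at hy ⊢
        intro hns
        have h5 := hmem1 _ hns
        rw [Equiv.apply_symm_apply] at h5
        exact hy h5
      let mid : {x // x ∈ S} ≃ {y // y ∈ T} :=
        { toFun := fun x => ⟨π x, hmem1 _ x.2⟩
          invFun := fun y => ⟨π.symm y, hmem1' _ y.2⟩
          left_inv := fun x => by simp
          right_inv := fun y => by simp }
      let mid' : {x // x ∈ Sᶜ} ≃ {y // y ∈ Tᶜ} :=
        { toFun := fun x => ⟨π x, by
            rw [Finset.mem_compl]
            exact hmem2 _ (Finset.mem_compl.mp x.2)⟩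
          invFun := fun y => ⟨π.symm y, hmem2' _ y.2⟩
          left_inv := fun x => by simp
          right_inv := fun y => by simp }
      refine ⟨⟨(Sᶜ.orderIsoOfFin rfl).toEquiv.trans (mid'.trans
          ((Tᶜ.orderIsoOfFin rfl).toEquiv.symm.trans (finCongr hc'.symm))),
        (S.orderIsoOfFin rfl).toEquiv.trans (mid.trans
          ((T.orderIsoOfFin rfl).toEquiv.symm.trans (finCongr hc.symm)))⟩,
        Finset.mem_product.mpr ⟨Finset.mem_univ _, Finset.mem_univ _⟩, ?_⟩
      ext x
      obtain ⟨z, rfl⟩ : ∃ z, x = eS S z := ⟨(eS S).symm x, ((eS S).apply_symm_apply x).symm⟩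
      have st : ∀ (w : Fin T.card), T.orderEmbOfFin hc.symm (finCongr hc.symm w)
          = T.orderEmbOfFin rfl w :=
        fun w => Finset.orderEmbOfFin_eq_orderEmbOfFin_iff.2 (by simp)
      have st' : ∀ (w : Fin Tᶜ.card), Tᶜ.orderEmbOfFin (hcard_compl hc).symm (finCongr hc'.symm w)
          = Tᶜ.orderEmbOfFin rfl w :=
        fun w => Finset.orderEmbOfFin_eq_orderEmbOfFin_iff.2 (by simp)
      have st2 : ∀ (u : {y // y ∈ T}),
          T.orderEmbOfFin rfl ((T.orderIsoOfFin rfl).toEquiv.symm u) = ↑u := by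
        intro u
        rw [← Finset.coe_orderIsoOfFin_apply]
        congr 1
        exact (T.orderIsoOfFin rfl).apply_symm_apply u
      have st2' : ∀ (u : {y // y ∈ Tᶜ}),
          Tᶜ.orderEmbOfFin rfl ((Tᶜ.orderIsoOfFin rfl).toEquiv.symm u) = ↑u := by
        intro u
        rw [← Finset.coe_orderIsoOfFin_apply]
        congr 1
        exact (Tᶜ.orderIsoOfFin rfl).apply_symm_apply u
      cases z with
      | inl i =>
          rw [eS_inl, Phi_apply_inl]
          simp only [Equiv.trans_apply, st, st2]
          simp [mid, Finset.coe_orderIsoOfFin_apply]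
      | inr j =>
          rw [eS_inr, Phi_apply_inr]
          simp only [Equiv.trans_apply, st', st2']
          simp [mid', Finset.coe_orderIsoOfFin_apply]
    · -- values agree
      rintro ⟨τ, σ⟩ -
      rw [hterm]
      rw [prod_orderEmbOfFin S (fun s => A s (Phi S T hc σ τ s)),
        prod_orderEmbOfFin Sᶜ (fun s => B s (Phi S T hc σ τ s))]
      simp_rw [Phi_apply_inl, Phi_apply_inr]
      rw [sign_Phi]
      ring
  · rw [if_neg hc]
    refine Finset.sum_eq_zero fun π hπ => ?_
    simp only [Finset.mem_filter, Finset.mem_univ, true_and] at hπ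
    have hcc : T.card = S.card := by
      rw [← hπ, Finset.card_image_of_injective _ π.injective]
    exact (hc hcc.symm).elim

end DetAdd

/-- **Determinant of a sum via minors.**
`det(A + B) = Σ_{S,T ⊆ [n], |S|=|T|} (−1)^{‖S‖₁+‖T‖₁} [A]_{S,T} [B]_{Sᶜ,Tᶜ}`,
where `‖X‖₁` is the sum of the elements of `X` (the parity is independent of whether the
indices are numbered from `0` or from `1`, since `|S| = |T|`). -/
theorem det_add_expansion (n : ℕ) (A B : Matrix (Fin n) (Fin n) ℝ) :
    Matrix.det (A + B) =
      ∑ S : Finset (Fin n), ∑ T : Finset (Fin n),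
        if S.card = T.card then
          (-1 : ℝ) ^ ((∑ i ∈ S, (i : ℕ)) + ∑ j ∈ T, (j : ℕ)) *
            minor A S T * minor B Sᶜ Tᶜ
        else 0 := by
  classical
  have h0 : Matrix.det (A + B) = ∑ S : Finset (Fin n), Matrix.det (S.piecewise A B) := by
    exact (Matrix.detRowAlternating (R := ℝ) (n := Fin n)).toMultilinearMap.map_add_univ
      (fun i => A i) (fun i => B i)
  rw [h0]
  exact Finset.sum_congr rfl fun S _ => DetAdd.det_piecewise S A B
end

section
/- Let Q be a random s×s real matrix distributed according to the Haar probability measure on the orthogonal group O(s). Then for all index sets S, T, U, V ⊆ {1,…,s} with |S| = |T| = i and |U| = |V| = ℓ, E[ [Q]_{S,T} · [Q]_{U,V} ] = (1/binom(s,i)) · 1_{S=U} · 1_{T=V}. In particular, a uniformly random orthonormal r-frame in ℝ^s (the first r columns of a Haar-random element of O(s)) satisfies the same identity for T, V ⊆ {1,…,r}. -/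
open Matrix MeasureTheory

noncomputable instance matMeasurableSpace (m n : ℕ) :
    MeasurableSpace (Matrix (Fin m) (Fin n) ℝ) :=
  MeasurableSpace.pi

/-- A probability measure on `s × s` real matrices is the *Haar distribution on `O(s)`* iff
it is supported on orthogonal matrices and invariant under left translation by every
orthogonal matrix (this characterizes the Haar probability measure of the compact group
`O(s)`). -/
def IsHaarOrthogonal {s : ℕ} (μ : Measure (Matrix (Fin s) (Fin s) ℝ)) : Prop :=
  IsProbabilityMeasure μ ∧
  (∀ᵐ Q ∂μ, Qᵀ * Q = 1) ∧
  ∀ U : Matrix (Fin s) (Fin s) ℝ, Uᵀ * U = 1 → μ.map (fun Q => U * Q) = μ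

/-- row-minor of a rectangular matrix: all columns, rows S -/
noncomputable def rminor {s i : ℕ} (A : Matrix (Fin s) (Fin i) ℝ) (S : Finset (Fin s)) : ℝ :=
  if h : S.card = i then (A.submatrix (S.orderEmbOfFin h) id).det else 0

lemma minor_eq {m n : ℕ} (C : Matrix (Fin m) (Fin n) ℝ) {S : Finset (Fin m)}
    {T : Finset (Fin n)} {i : ℕ} (hS : S.card = i) (hT : T.card = i) :
    minor C S T = (Matrix.of fun (k l : Fin i) =>
      C (S.orderEmbOfFin hS k) (T.orderEmbOfFin hT l)).det := by
  subst hS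
  rw [minor, dif_pos (hT.symm : S.card = T.card)]

lemma minor_eq_zero {m n : ℕ} (C : Matrix (Fin m) (Fin n) ℝ) {S : Finset (Fin m)}
    {T : Finset (Fin n)} (h : S.card ≠ T.card) : minor C S T = 0 := dif_neg h

lemma rminor_eq {s i : ℕ} (A : Matrix (Fin s) (Fin i) ℝ) {S : Finset (Fin s)}
    (h : S.card = i) : rminor A S = (A.submatrix (S.orderEmbOfFin h) id).det :=
  dif_pos h

lemma minor_eq_rminor {s : ℕ} (Q : Matrix (Fin s) (Fin s) ℝ) {S T : Finset (Fin s)}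
    {i : ℕ} (hS : S.card = i) (hT : T.card = i) :
    minor Q S T = rminor (Q.submatrix id (T.orderEmbOfFin hT)) S := by
  rw [minor_eq Q hS hT, rminor_eq _ hS]
  rfl

/-- Cauchy–Binet -/
lemma cauchy_binet {s i : ℕ} (A B : Matrix (Fin s) (Fin i) ℝ) :
    (Aᵀ * B).det =
      ∑ S ∈ Finset.powersetCard i (Finset.univ : Finset (Fin s)),
        rminor A S * rminor B S := by
  classical
  -- expand det as multilinear map in rows
  have h1 : (Aᵀ * B).det
      = ∑ f : Fin i → Fin s, (∏ k, A (f k) k) * (B.submatrix f id).det := by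
    have : (Aᵀ * B) = Matrix.of (fun k => ∑ c : Fin s, A c k • (fun l => B c l)) := by
      ext k l
      simp [Matrix.mul_apply, Finset.sum_apply]
    rw [this]
    show (Matrix.detRowAlternating (Matrix.of fun k => ∑ c : Fin s, A c k • (fun l => B c l))) = _
    show ((Matrix.detRowAlternating :
      (Fin i → ℝ) [⋀^Fin i]→ₗ[ℝ] ℝ).toMultilinearMap
        (fun k => ∑ c : Fin s, (fun c' => A c' k • (fun l => B c' l)) c)) = _
    rw [MultilinearMap.map_sum]
    refine Finset.sum_congr rfl fun f _ => ?_
    show ((Matrix.detRowAlternating :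
      (Fin i → ℝ) [⋀^Fin i]→ₗ[ℝ] ℝ).toMultilinearMap
        (fun k => A (f k) k • (fun k' => (fun l => B (f k') l)) k)) = _
    rw [MultilinearMap.map_smul_univ]
    rw [smul_eq_mul]
    rfl
  rw [h1]
  -- kill non-injective f
  rw [← Finset.sum_filter_add_sum_filter_not Finset.univ (fun f => Function.Injective f)]
  have h2 : ∑ f ∈ Finset.univ.filter (fun f : Fin i → Fin s => ¬ Function.Injective f),
      (∏ k, A (f k) k) * (B.submatrix f id).det = 0 := by
    refine Finset.sum_eq_zero fun f hf => ?_
    rw [Finset.mem_filter] at hf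
    rw [Function.not_injective_iff] at hf
    obtain ⟨a, b, hab, hne⟩ := hf.2
    rw [Matrix.det_zero_of_row_eq hne (by
      ext l
      simp [Matrix.submatrix_apply, hab]), mul_zero]
  rw [h2, add_zero]
  -- group by image
  rw [← Finset.sum_fiberwise_of_maps_to (g := fun f : Fin i → Fin s => Finset.image f Finset.univ)
    (t := Finset.powersetCard i (Finset.univ : Finset (Fin s)))
    (fun f hf => by
      rw [Finset.mem_filter] at hf
      rw [Finset.mem_powersetCard_univ]
      rw [Finset.card_image_of_injective _ hf.2, Finset.card_univ, Fintype.card_fin])]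
  refine Finset.sum_congr rfl fun S hS => ?_
  rw [Finset.mem_powersetCard_univ] at hS
  rw [rminor_eq A hS, rminor_eq B hS]
  set e := S.orderEmbOfFin hS with he
  -- bijection with permutations
  have key : ∀ π : Equiv.Perm (Fin i),
      (B.submatrix (fun k => e (π k)) id).det
        = (Equiv.Perm.sign π : ℤ) * (B.submatrix e id).det := by
    intro π
    have : B.submatrix (fun k => e (π k)) id = (B.submatrix e id).submatrix π id := by
      ext k l; rfl
    rw [this, Matrix.det_permute]
  rw [show ∑ f ∈ (Finset.univ.filter (fun f : Fin i → Fin s => Function.Injective f)).filter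
        (fun f => Finset.image f Finset.univ = S),
        (∏ k, A (f k) k) * (B.submatrix f id).det
      = ∑ π : Equiv.Perm (Fin i),
        (∏ k, A (e (π k)) k) * (B.submatrix (fun k => e (π k)) id).det from ?_]
  · simp_rw [key]
    rw [Matrix.det_apply (A.submatrix e id)]
    rw [Finset.sum_mul]
    refine Finset.sum_congr rfl fun π _ => ?_
    simp [Matrix.submatrix_apply, Units.smul_def, zsmul_eq_mul]
    ring
  · -- the bijection
    refine (Finset.sum_bij (fun (π : Equiv.Perm (Fin i)) _ => fun k => e (π k))
      ?_ ?_ ?_ ?_).symm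
    · -- lands in filtered set
      intro π _
      have hpinj : Function.Injective fun k => e (π k) :=
        fun a b hab => π.injective ((S.orderEmbOfFin hS).injective hab)
      rw [Finset.mem_filter, Finset.mem_filter]
      refine ⟨⟨Finset.mem_univ _, hpinj⟩, ?_⟩
      apply Finset.eq_of_subset_of_card_le
      · intro x hx
        rw [Finset.mem_image] at hx
        obtain ⟨k, _, rfl⟩ := hx
        exact Finset.orderEmbOfFin_mem S hS (π k)
      · rw [hS, Finset.card_image_of_injective _ hpinj, Finset.card_univ, Fintype.card_fin]
    · -- injective
      intro π₁ _ π₂ _ hp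
      have : ∀ k, π₁ k = π₂ k := fun k => (S.orderEmbOfFin hS).injective (congrFun hp k)
      exact Equiv.ext this
    · -- surjective
      intro f hf
      rw [Finset.mem_filter, Finset.mem_filter] at hf
      have hfS : ∀ k, f k ∈ S := by
        intro k
        rw [← hf.2]
        exact Finset.mem_image_of_mem f (Finset.mem_univ k)
      have hco : ∀ k : Fin i, ((S.orderIsoOfFin hS) k : Fin s) = e k := fun k =>
        Finset.coe_orderIsoOfFin_apply S hS k
      have hbij : Function.Bijective
          (fun k => (S.orderIsoOfFin hS).symm ⟨f k, hfS k⟩) := by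
        apply Finite.injective_iff_bijective.1
        intro a b hab
        apply hf.1.2
        have := congrArg (fun x => ((S.orderIsoOfFin hS) x : Fin s)) hab
        simpa using this
      refine ⟨Equiv.ofBijective _ hbij, Finset.mem_univ _, ?_⟩
      funext k
      show e ((S.orderIsoOfFin hS).symm ⟨f k, hfS k⟩) = f k
      rw [← hco]
      rw [OrderIso.apply_symm_apply]
    · -- values agree
      intro π _
      rfl

/-- minor of the identity matrix -/
lemma minor_one {s : ℕ} {T V : Finset (Fin s)} {i : ℕ} (hT : T.card = i) (hV : V.card = i) :
    minor (1 : Matrix (Fin s) (Fin s) ℝ) T V = if T = V then 1 else 0 := by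
  by_cases h : T = V
  · subst h
    rw [minor_eq _ hT hT, if_pos rfl]
    have : (Matrix.of fun (k l : Fin i) =>
        (1 : Matrix (Fin s) (Fin s) ℝ) (T.orderEmbOfFin hT k) (T.orderEmbOfFin hT l))
        = (1 : Matrix (Fin i) (Fin i) ℝ) := by
      ext k l
      by_cases hkl : k = l
      · subst hkl; simp [Matrix.one_apply]
      · simp [Matrix.one_apply, hkl, fun h => hkl ((T.orderEmbOfFin hT).injective h)]
    rw [this, Matrix.det_one]
  · rw [if_neg h, minor_eq _ hT hV]
    -- pick a ∈ T \ V
    have hTV : ∃ a, a ∈ T ∧ a ∉ V := by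
      by_contra hc
      push_neg at hc
      exact h (Finset.eq_of_subset_of_card_le (fun x hx => hc x hx) (by rw [hT, hV]))
    obtain ⟨a, haT, haV⟩ := hTV
    set k₀ : Fin i := (T.orderIsoOfFin hT).symm ⟨a, haT⟩ with hk₀
    apply Matrix.det_eq_zero_of_row_eq_zero k₀
    intro l
    have hemb : T.orderEmbOfFin hT k₀ = a := by
      rw [← Finset.coe_orderIsoOfFin_apply, hk₀, OrderIso.apply_symm_apply]
    simp only [Matrix.of_apply, hemb, Matrix.one_apply]
    rw [if_neg]
    intro hal
    exact haV (hal ▸ Finset.orderEmbOfFin_mem V hV l)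

/-- scaling rows of the matrix scales the minor -/
lemma minor_row_scale {s : ℕ} (Q : Matrix (Fin s) (Fin s) ℝ) (v : Fin s → ℝ)
    (S T : Finset (Fin s)) :
    minor (Matrix.of fun a b => v a * Q a b) S T = (∏ a ∈ S, v a) * minor Q S T := by
  by_cases h : S.card = T.card
  · rw [minor, dif_pos h, minor, dif_pos h]
    have : (Matrix.of fun (k l : Fin S.card) =>
        (Matrix.of fun a b => v a * Q a b) (S.orderEmbOfFin rfl k) (T.orderEmbOfFin h.symm l))
        = Matrix.of fun (k l : Fin S.card) =>
          (v ∘ S.orderEmbOfFin rfl) k *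
          (Matrix.of fun (k l : Fin S.card) =>
            Q (S.orderEmbOfFin rfl k) (T.orderEmbOfFin h.symm l)) k l := rfl
    rw [this, Matrix.det_mul_column]
    congr 1
    rw [← Finset.prod_coe_sort S v]
    exact Fintype.prod_equiv (S.orderIsoOfFin rfl).toEquiv _ _
      (fun k => by
        have := Finset.coe_orderIsoOfFin_apply S rfl k
        simp only [Function.comp_apply]
        rw [← this]
        rfl)
  · rw [minor_eq_zero _ h, minor_eq_zero _ h, mul_zero]

/-- permuting rows of the matrix -/
lemma minor_row_perm {s i : ℕ} (Q : Matrix (Fin s) (Fin s) ℝ) (σ : Equiv.Perm (Fin s))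
    (S₀ S : Finset (Fin s)) (T : Finset (Fin s)) (h₀ : S₀.card = i) (hS : S.card = i)
    (hcomp : ∀ k : Fin i, σ (S₀.orderEmbOfFin h₀ k) = S.orderEmbOfFin hS k) :
    minor (Q.submatrix σ id) S₀ T = minor Q S T := by
  by_cases h : T.card = i
  · rw [minor_eq _ h₀ h, minor_eq _ hS h]
    congr 1
    ext k l
    simp [Matrix.submatrix_apply, hcomp k]
  · rw [minor_eq_zero _ (by omega), minor_eq_zero _ (by omega)]

section PermMat
variable {s : ℕ}

/-- permutation matrix: (permMat σ * Q) a b = Q (σ a) b -/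
noncomputable def permMat (σ : Equiv.Perm (Fin s)) : Matrix (Fin s) (Fin s) ℝ :=
  Matrix.of fun a b => if b = σ a then 1 else 0

lemma permMat_orth (σ : Equiv.Perm (Fin s)) : (permMat σ)ᵀ * permMat σ = 1 := by
  ext a b
  simp only [Matrix.mul_apply, Matrix.transpose_apply, permMat, Matrix.of_apply,
    Matrix.one_apply]
  rw [Fintype.sum_eq_single (σ.symm a)]
  · by_cases hab : a = b
    · subst hab; simp
    · rw [if_pos (by simp), if_neg (by
        intro hc
        exact hab (by simpa using hc.symm ▸ (Equiv.apply_symm_apply σ a).symm ▸ rfl)), mul_zero,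
        if_neg hab]
  · intro c hc
    rw [if_neg (fun h => hc (by rw [h]; simp)), zero_mul]

lemma permMat_mul (σ : Equiv.Perm (Fin s)) (Q : Matrix (Fin s) (Fin s) ℝ) :
    permMat σ * Q = Q.submatrix σ id := by
  ext a b
  simp only [Matrix.mul_apply, permMat, Matrix.of_apply, Matrix.submatrix_apply, id_eq]
  rw [Fintype.sum_eq_single (σ a)]
  · simp
  · intro c hc
    rw [if_neg (fun h => hc h), zero_mul]

/-- a permutation carrying `S₀` to `S` compatibly with the order embeddings -/
lemma exists_perm_emb {S₀ S : Finset (Fin s)} {i : ℕ} (h₀ : S₀.card = i) (hS : S.card = i) :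
    ∃ σ : Equiv.Perm (Fin s),
      ∀ k : Fin i, σ (S₀.orderEmbOfFin h₀ k) = S.orderEmbOfFin hS k := by
  classical
  have hcard : Fintype.card {x // x ∉ S₀} = Fintype.card {x // x ∉ S} := by
    have h1 : Fintype.card {x // x ∈ S₀} = Fintype.card {x // x ∈ S} := by
      rw [Fintype.card_coe, Fintype.card_coe, h₀, hS]
    rw [Fintype.card_subtype_compl, Fintype.card_subtype_compl, h1]
  let e : {x // x ∈ S₀} ≃ {x // x ∈ S} :=
    (S₀.orderIsoOfFin h₀).toEquiv.symm.trans (S.orderIsoOfFin hS).toEquiv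
  let f : {x // x ∉ S₀} ≃ {x // x ∉ S} := Fintype.equivOfCardEq hcard
  refine ⟨(Equiv.sumCompl (· ∈ S₀)).symm.trans ((e.sumCongr f).trans
    (Equiv.sumCompl (· ∈ S))), fun k => ?_⟩
  have hm : S₀.orderEmbOfFin h₀ k ∈ S₀ := Finset.orderEmbOfFin_mem S₀ h₀ k
  simp only [Equiv.trans_apply]
  rw [Equiv.sumCompl_symm_apply_of_pos hm]
  simp only [Equiv.sumCongr_apply, Sum.map_inl, Equiv.sumCompl_apply_inl]
  show ((e ⟨S₀.orderEmbOfFin h₀ k, hm⟩ : {x // x ∈ S}) : Fin s) = _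
  have h1 : (⟨S₀.orderEmbOfFin h₀ k, hm⟩ : {x // x ∈ S₀}) = (S₀.orderIsoOfFin h₀) k := by
    apply Subtype.ext
    rw [Finset.coe_orderIsoOfFin_apply]
  show (((S.orderIsoOfFin hS) ((S₀.orderIsoOfFin h₀).toEquiv.symm
      ⟨S₀.orderEmbOfFin h₀ k, hm⟩) : {x // x ∈ S})  : Fin s) = _
  rw [h1]
  have : (S₀.orderIsoOfFin h₀).toEquiv.symm ((S₀.orderIsoOfFin h₀) k) = k := by
    simp
  rw [this, Finset.coe_orderIsoOfFin_apply]

/-- bound on a minor when entries are bounded by 1 -/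
lemma abs_minor_le {Q : Matrix (Fin s) (Fin s) ℝ} (hQ : ∀ a b, |Q a b| ≤ 1)
    (S T : Finset (Fin s)) : |minor Q S T| ≤ (S.card).factorial := by
  by_cases h : S.card = T.card
  · rw [minor, dif_pos h]
    rw [Matrix.det_apply]
    refine (Finset.abs_sum_le_sum_abs _ _).trans ?_
    have hterm : ∀ σ : Equiv.Perm (Fin S.card),
        |Equiv.Perm.sign σ • ∏ k, (Matrix.of fun (k l : Fin S.card) =>
          Q (S.orderEmbOfFin rfl k) (T.orderEmbOfFin h.symm l)) (σ k) k| ≤ 1 := by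
      intro σ
      rw [Units.smul_def, zsmul_eq_mul, abs_mul]
      have hsign : |((Equiv.Perm.sign σ : ℤ) : ℝ)| = 1 := by
        rcases Int.units_eq_one_or (Equiv.Perm.sign σ) with hs | hs <;> rw [hs] <;> norm_num
      rw [hsign, one_mul, Finset.abs_prod]
      refine Finset.prod_le_one (fun k _ => abs_nonneg _) (fun k _ => hQ _ _)
    refine (Finset.sum_le_sum fun σ _ => hterm σ).trans ?_
    rw [Finset.sum_const, Finset.card_univ, Fintype.card_perm, Fintype.card_fin, nsmul_eq_mul,
      mul_one]
  · rw [minor_eq_zero _ h]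
    simp only [abs_zero]
    positivity

lemma entries_le_one {Q : Matrix (Fin s) (Fin s) ℝ} (hQ : Qᵀ * Q = 1) :
    ∀ a b, |Q a b| ≤ 1 := by
  intro a b
  have h1 : ∑ c, Q c b * Q c b = 1 := by
    have := congrFun (congrFun hQ b) b
    simpa [Matrix.mul_apply, Matrix.transpose_apply, Matrix.one_apply] using this
  have h2 : Q a b * Q a b ≤ 1 := by
    rw [← h1]
    exact Finset.single_le_sum (fun c _ => mul_self_nonneg (Q c b)) (Finset.mem_univ a)
  exact abs_le_one_iff_mul_self_le_one.2 h2

/-- measurability of minors -/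
lemma measurable_minor {m n : ℕ} (S : Finset (Fin m)) (T : Finset (Fin n)) :
    Measurable fun Q : Matrix (Fin m) (Fin n) ℝ => minor Q S T := by
  by_cases h : S.card = T.card
  · simp only [minor, dif_pos h]
    have : (fun Q : Matrix (Fin m) (Fin n) ℝ => (Matrix.of fun (i j : Fin S.card) =>
        Q (S.orderEmbOfFin rfl i) (T.orderEmbOfFin h.symm j)).det)
        = fun Q => ∑ σ : Equiv.Perm (Fin S.card), Equiv.Perm.sign σ •
          ∏ k, Q (S.orderEmbOfFin rfl (σ k)) (T.orderEmbOfFin h.symm k) := by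
      funext Q
      rw [Matrix.det_apply]
      rfl
    rw [this]
    refine Finset.measurable_sum _ fun σ _ => ?_
    refine Measurable.const_smul ?_ _
    refine Finset.measurable_prod _ fun k _ => ?_
    exact (measurable_pi_apply _).comp (measurable_pi_apply _)
  · simp only [minor, dif_neg h]
    exact measurable_const

end PermMat

section Meas
variable {s : ℕ} {μ : Measure (Matrix (Fin s) (Fin s) ℝ)} (hμ : IsHaarOrthogonal μ)

lemma measurable_mul_left (U : Matrix (Fin s) (Fin s) ℝ) :
    Measurable fun Q : Matrix (Fin s) (Fin s) ℝ => U * Q := by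
  apply measurable_pi_lambda
  intro a
  apply measurable_pi_lambda
  intro b
  have : (fun Q : Matrix (Fin s) (Fin s) ℝ => (U * Q) a b)
      = fun Q => ∑ c, U a c * Q c b := by
    funext Q; rw [Matrix.mul_apply]
  rw [this]
  refine Finset.measurable_sum _ fun c _ => ?_
  have h1 : Measurable fun Q : Matrix (Fin s) (Fin s) ℝ => Q c b :=
    (measurable_pi_apply b).comp (measurable_pi_apply c)
  exact h1.const_mul (U a c)

include hμ

lemma integrable_minor_mul (S T U V : Finset (Fin s)) :
    Integrable (fun Q => minor Q S T * minor Q U V) μ := by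
  have hmeas : Measurable fun Q : Matrix (Fin s) (Fin s) ℝ => minor Q S T * minor Q U V :=
    (measurable_minor S T).mul (measurable_minor U V)
  have : IsProbabilityMeasure μ := hμ.1
  refine Integrable.mono' (integrable_const ((S.card).factorial * (U.card).factorial : ℝ))
    hmeas.aestronglyMeasurable ?_
  filter_upwards [hμ.2.1] with Q hQ
  have h1 := entries_le_one hQ
  rw [Real.norm_eq_abs, abs_mul]
  exact mul_le_mul (abs_minor_le h1 S T) (abs_minor_le h1 U V) (abs_nonneg _) (by positivity)

lemma integral_mul_left_inv (U : Matrix (Fin s) (Fin s) ℝ) (hU : Uᵀ * U = 1)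
    (f : Matrix (Fin s) (Fin s) ℝ → ℝ) (hf : Measurable f) :
    ∫ Q, f (U * Q) ∂μ = ∫ Q, f Q ∂μ := by
  conv_rhs => rw [← hμ.2.2 U hU]
  rw [integral_map (measurable_mul_left U).aemeasurable hf.aestronglyMeasurable]

end Meas

section Core
variable {s : ℕ} {μ : Measure (Matrix (Fin s) (Fin s) ℝ)} (hμ : IsHaarOrthogonal μ)
include hμ

lemma integral_zero_of_ne (S T U V : Finset (Fin s)) (hne : S ≠ U) :
    ∫ Q, minor Q S T * minor Q U V ∂μ = 0 := by
  classical
  have hex : ∃ a, ((a ∈ S) ∧ a ∉ U) ∨ ((a ∈ U) ∧ a ∉ S) := by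
    by_contra hc
    push_neg at hc
    apply hne
    ext a
    have := hc a
    tauto
  obtain ⟨a, ha⟩ := hex
  set v : Fin s → ℝ := fun x => if x = a then (-1 : ℝ) else 1 with hv
  have hD : (Matrix.diagonal v)ᵀ * Matrix.diagonal v = 1 := by
    rw [Matrix.diagonal_transpose, Matrix.diagonal_mul_diagonal]
    have : (fun x => v x * v x) = fun _ => (1 : ℝ) := by
      funext x
      by_cases hx : x = a <;> simp [hv, hx]
    rw [this, Matrix.diagonal_one]
  have hDQ : ∀ Q : Matrix (Fin s) (Fin s) ℝ,
      Matrix.diagonal v * Q = Matrix.of fun x y => v x * Q x y := by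
    intro Q
    ext x y
    rw [Matrix.diagonal_mul]
    rfl
  have hmeas : Measurable fun Q : Matrix (Fin s) (Fin s) ℝ => minor Q S T * minor Q U V :=
    (measurable_minor S T).mul (measurable_minor U V)
  have key := integral_mul_left_inv hμ (Matrix.diagonal v) hD _ hmeas
  have hsign : (∏ x ∈ S, v x) * (∏ x ∈ U, v x) = -1 := by
    rw [hv]
    rw [Finset.prod_ite_eq' S a (fun _ => (-1 : ℝ)),
      Finset.prod_ite_eq' U a (fun _ => (-1 : ℝ))]
    rcases ha with ⟨h1, h2⟩ | ⟨h1, h2⟩ <;> simp [h1, h2]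
  have hptw : ∀ Q : Matrix (Fin s) (Fin s) ℝ,
      minor (Matrix.diagonal v * Q) S T * minor (Matrix.diagonal v * Q) U V
        = -(minor Q S T * minor Q U V) := by
    intro Q
    rw [hDQ, minor_row_scale, minor_row_scale]
    rw [show (∏ x ∈ S, v x) * minor Q S T * ((∏ x ∈ U, v x) * minor Q U V)
      = ((∏ x ∈ S, v x) * (∏ x ∈ U, v x)) * (minor Q S T * minor Q U V) by ring, hsign]
    ring
  rw [show (fun Q => minor (Matrix.diagonal v * Q) S T * minor (Matrix.diagonal v * Q) U V)
    = fun Q => -(minor Q S T * minor Q U V) from funext hptw] at key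
  rw [integral_neg] at key
  linarith

lemma integral_eq_of_perm (S₀ S T V : Finset (Fin s)) {i : ℕ}
    (h₀ : S₀.card = i) (hS : S.card = i) :
    ∫ Q, minor Q S T * minor Q S V ∂μ = ∫ Q, minor Q S₀ T * minor Q S₀ V ∂μ := by
  obtain ⟨σ, hσ⟩ := exists_perm_emb h₀ hS
  have hmeas : Measurable fun Q : Matrix (Fin s) (Fin s) ℝ => minor Q S₀ T * minor Q S₀ V :=
    (measurable_minor S₀ T).mul (measurable_minor S₀ V)
  have key := integral_mul_left_inv hμ (permMat σ) (permMat_orth σ) _ hmeas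
  rw [show (fun Q => minor (permMat σ * Q) S₀ T * minor (permMat σ * Q) S₀ V)
    = fun Q => minor Q S T * minor Q S V from funext fun Q => by
      rw [permMat_mul, minor_row_perm Q σ S₀ S T h₀ hS hσ,
        minor_row_perm Q σ S₀ S V h₀ hS hσ]] at key
  exact key

lemma integral_core (S T V : Finset (Fin s)) {i : ℕ}
    (hS : S.card = i) (hT : T.card = i) (hV : V.card = i) :
    ∫ Q, minor Q S T * minor Q S V ∂μ
      = (if T = V then 1 else 0) * ((s.choose i : ℕ) : ℝ)⁻¹ := by
  classical
  have hprob : IsProbabilityMeasure μ := hμ.1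
  have hsum : ∀ Q : Matrix (Fin s) (Fin s) ℝ, Qᵀ * Q = 1 →
      ∑ S' ∈ Finset.powersetCard i (Finset.univ : Finset (Fin s)),
        minor Q S' T * minor Q S' V = if T = V then 1 else 0 := by
    intro Q hQ
    have h1 : ∑ S' ∈ Finset.powersetCard i (Finset.univ : Finset (Fin s)),
        minor Q S' T * minor Q S' V
        = ∑ S' ∈ Finset.powersetCard i (Finset.univ : Finset (Fin s)),
          rminor (Q.submatrix id (T.orderEmbOfFin hT)) S' *
          rminor (Q.submatrix id (V.orderEmbOfFin hV)) S' := by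
      refine Finset.sum_congr rfl fun S' hS' => ?_
      rw [Finset.mem_powersetCard_univ] at hS'
      rw [minor_eq_rminor Q hS' hT, minor_eq_rminor Q hS' hV]
    rw [h1, ← cauchy_binet]
    have h2 : (Q.submatrix id (T.orderEmbOfFin hT))ᵀ * Q.submatrix id (V.orderEmbOfFin hV)
        = Matrix.of fun (k l : Fin i) =>
          (1 : Matrix (Fin s) (Fin s) ℝ) (T.orderEmbOfFin hT k) (V.orderEmbOfFin hV l) := by
      ext k l
      have := congrFun (congrFun hQ (T.orderEmbOfFin hT k)) (V.orderEmbOfFin hV l)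
      simp only [Matrix.mul_apply, Matrix.transpose_apply, Matrix.submatrix_apply, id_eq,
        Matrix.of_apply]
      simp only [Matrix.mul_apply, Matrix.transpose_apply] at this
      rw [this]
    rw [h2, ← minor_eq (1 : Matrix (Fin s) (Fin s) ℝ) hT hV, minor_one hT hV]
  have his : i ≤ s := by
    have := Finset.card_le_univ T
    rwa [hT, Fintype.card_fin] at this
  have hchoose : (0 : ℝ) < ((s.choose i : ℕ) : ℝ) := by
    exact_mod_cast Nat.choose_pos his
  -- sum of integrals
  have hsum_int : ∑ S' ∈ Finset.powersetCard i (Finset.univ : Finset (Fin s)),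
      ∫ Q, minor Q S' T * minor Q S' V ∂μ = if T = V then 1 else 0 := by
    rw [← integral_finset_sum _ (fun S' _ => integrable_minor_mul hμ S' T S' V)]
    rw [show (if T = V then (1:ℝ) else 0)
      = ∫ _ : Matrix (Fin s) (Fin s) ℝ, (if T = V then (1:ℝ) else 0) ∂μ by
        rw [integral_const]; simp]
    refine integral_congr_ae ?_
    filter_upwards [hμ.2.1] with Q hQ
    exact hsum Q hQ
  have hconst : ∀ S' ∈ Finset.powersetCard i (Finset.univ : Finset (Fin s)),
      ∫ Q, minor Q S' T * minor Q S' V ∂μ = ∫ Q, minor Q S T * minor Q S V ∂μ := by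
    intro S' hS'
    rw [Finset.mem_powersetCard_univ] at hS'
    exact integral_eq_of_perm hμ S S' T V hS hS'
  rw [Finset.sum_congr rfl hconst, Finset.sum_const, Finset.card_powersetCard,
    Finset.card_univ, Fintype.card_fin, nsmul_eq_mul] at hsum_int
  have hfin : ∫ Q, minor Q S T * minor Q S V ∂μ
      = (if T = V then (1:ℝ) else 0) / ((s.choose i : ℕ) : ℝ) := by
    rw [eq_div_iff (ne_of_gt hchoose), mul_comm]
    exact hsum_int
  rw [hfin, div_eq_mul_inv]

end Core

lemma minor_castLE {s r : ℕ} (hrs : r ≤ s) (Q : Matrix (Fin s) (Fin s) ℝ)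
    (S : Finset (Fin s)) (T : Finset (Fin r)) :
    minor (Matrix.of fun (a : Fin s) (b : Fin r) => Q a (Fin.castLE hrs b)) S T
      = minor Q S (T.map (Fin.castLEOrderEmb hrs).toEmbedding) := by
  classical
  have hcard : (T.map (Fin.castLEOrderEmb hrs).toEmbedding).card = T.card := Finset.card_map _
  by_cases h : S.card = T.card
  · have h' : S.card = (T.map (Fin.castLEOrderEmb hrs).toEmbedding).card := by rw [hcard, h]
    rw [minor, dif_pos h, minor, dif_pos h']
    congr 1
    ext k l
    simp only [Matrix.of_apply]
    congr 1
    have hmem : ∀ x : Fin S.card, Fin.castLE hrs (T.orderEmbOfFin h.symm x)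
        ∈ T.map (Fin.castLEOrderEmb hrs).toEmbedding := by
      intro x
      rw [Finset.mem_map]
      exact ⟨T.orderEmbOfFin h.symm x, Finset.orderEmbOfFin_mem T h.symm x, rfl⟩
    have hmono : StrictMono fun x : Fin S.card =>
        Fin.castLE hrs (T.orderEmbOfFin h.symm x) :=
      (Fin.strictMono_castLE hrs).comp (T.orderEmbOfFin h.symm).strictMono
    exact congrFun (Finset.orderEmbOfFin_unique h'.symm hmem hmono) l
  · rw [minor_eq_zero _ h, minor_eq_zero _ (by rw [hcard]; exact h)]


/-- **Minor-orthogonality of Haar-random orthogonal matrices.**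
If `Q` is Haar-distributed on `O(s)`, then
`E[[Q]_{S,T}·[Q]_{U,V}] = 1_{S=U}·1_{T=V}/binom(s,|S|)`; in particular the uniformly random
orthonormal `r`-frame given by the first `r` columns of `Q` satisfies the same identity for
column sets `T, V ⊆ {1,…,r}`. -/
theorem haar_orthogonal_minor_orthogonal
    (s : ℕ) (μ : Measure (Matrix (Fin s) (Fin s) ℝ)) (hμ : IsHaarOrthogonal μ) :
    (∀ (S T U V : Finset (Fin s)) (i ℓ : ℕ),
      S.card = i → T.card = i → U.card = ℓ → V.card = ℓ →
      ∫ Q, minor Q S T * minor Q U V ∂μ =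
        if S = U ∧ T = V then ((s.choose i : ℕ) : ℝ)⁻¹ else 0) ∧
    ∀ (r : ℕ) (hrs : r ≤ s) (S U : Finset (Fin s)) (T V : Finset (Fin r)) (i ℓ : ℕ),
      S.card = i → T.card = i → U.card = ℓ → V.card = ℓ →
      ∫ Q, minor (Matrix.of fun (a : Fin s) (b : Fin r) => Q a (Fin.castLE hrs b)) S T *
          minor (Matrix.of fun (a : Fin s) (b : Fin r) => Q a (Fin.castLE hrs b)) U V ∂μ =
        if S = U ∧ T = V then ((s.choose i : ℕ) : ℝ)⁻¹ else 0 := by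
  have part1 : ∀ (S T U V : Finset (Fin s)) (i ℓ : ℕ),
      S.card = i → T.card = i → U.card = ℓ → V.card = ℓ →
      ∫ Q, minor Q S T * minor Q U V ∂μ =
        if S = U ∧ T = V then ((s.choose i : ℕ) : ℝ)⁻¹ else 0 := by
    intro S T U V i ℓ h1 h2 h3 h4
    by_cases hSU : S = U
    · subst hSU
      have hil : i = ℓ := by rw [← h1, ← h3]
      subst hil
      rw [integral_core hμ S T V h1 h2 h4]
      by_cases hTV : T = V <;> simp [hTV]
    · rw [integral_zero_of_ne hμ S T U V hSU, if_neg (by tauto)]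
  refine ⟨part1, ?_⟩
  intro r hrs S U T V i ℓ h1 h2 h3 h4
  have hre : ∀ Q : Matrix (Fin s) (Fin s) ℝ,
      minor (Matrix.of fun (a : Fin s) (b : Fin r) => Q a (Fin.castLE hrs b)) S T *
        minor (Matrix.of fun (a : Fin s) (b : Fin r) => Q a (Fin.castLE hrs b)) U V
      = minor Q S (T.map (Fin.castLEOrderEmb hrs).toEmbedding) *
        minor Q U (V.map (Fin.castLEOrderEmb hrs).toEmbedding) := fun Q => by
    rw [minor_castLE, minor_castLE]
  rw [show (∫ Q, minor (Matrix.of fun (a : Fin s) (b : Fin r) => Q a (Fin.castLE hrs b)) S T *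
      minor (Matrix.of fun (a : Fin s) (b : Fin r) => Q a (Fin.castLE hrs b)) U V ∂μ)
    = ∫ Q, minor Q S (T.map (Fin.castLEOrderEmb hrs).toEmbedding) *
        minor Q U (V.map (Fin.castLEOrderEmb hrs).toEmbedding) ∂μ from
    integral_congr_ae (Filter.Eventually.of_forall fun Q => hre Q)]
  rw [part1 S (T.map (Fin.castLEOrderEmb hrs).toEmbedding) U
    (V.map (Fin.castLEOrderEmb hrs).toEmbedding) i ℓ h1 (by rw [Finset.card_map]; exact h2)
    h3 (by rw [Finset.card_map]; exact h4)]
  congr 1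
  rw [eq_iff_iff]
  constructor
  · rintro ⟨hsu, htv⟩
    exact ⟨hsu, Finset.map_injective _ htv⟩
  · rintro ⟨hsu, htv⟩
    exact ⟨hsu, by rw [htv]⟩
end
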